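/- arXiv:1309.5184 — 4 statements merged into one kernel-verified Lean document; each statement's English description precedes it below -/
import Mathlib

section
/- If there exists a complete accepting tableau branch containing the initial prefixed formula (1,1) φ, then the RML^∃ formula φ is satisfiable. -/
/-- RML^∃ formulas: p | ¬p | φ∧φ | φ∨φ | ◇φ | □φ | ∃_r φ -/
inductive RML : Type where
  | pos : ℕ → RML
  | neg : ℕ → RML
  | and : RML → RML → RML
  | or  : RML → RML → RML
  | dia : RML → RML
  | box : RML → RML
  | ex  : RML → RML

/-- A Kripke model over a state type `W`. -/
structure Kripke (W : Type) where
  R : W → W → Prop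
  V : W → Set ℕ

/-- `ρ` is a refinement mapping from `M` to `M'`: a non-empty relation
satisfying the atom and back conditions. -/
def RefinementMapping {W W' : Type} (M : Kripke W) (M' : Kripke W')
    (ρ : W → W' → Prop) : Prop :=
  (∃ s s', ρ s s') ∧
  (∀ s s', ρ s s' → M.V s = M'.V s') ∧
  (∀ s s' t', ρ s s' → M'.R s' t' → ∃ t, M.R s t ∧ ρ t t')

/-- `(M', s')` is a refinement of `(M, s)`. -/
def RefinementOf {W W' : Type} (M' : Kripke W') (s' : W')
    (M : Kripke W) (s : W) : Prop :=
  ∃ ρ, RefinementMapping M M' ρ ∧ ρ s s'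

/-- Semantics of RML^∃ formulas. -/
def Sat {W : Type} (M : Kripke W) : W → RML → Prop
  | s, RML.pos p => p ∈ M.V s
  | s, RML.neg p => p ∉ M.V s
  | s, RML.and ψ₁ ψ₂ => Sat M s ψ₁ ∧ Sat M s ψ₂
  | s, RML.or ψ₁ ψ₂ => Sat M s ψ₁ ∨ Sat M s ψ₂
  | s, RML.dia ψ => ∃ t, M.R s t ∧ Sat M t ψ
  | s, RML.box ψ => ∀ t, M.R s t → Sat M t ψ
  | s, RML.ex ψ => ∃ (W' : Type) (M' : Kripke W') (s' : W'),
      RefinementOf M' s' M s ∧ Sat M' s' ψ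

def Satisfiable (φ : RML) : Prop :=
  ∃ (W : Type) (M : Kripke W) (s : W), Sat M s φ

/-- Prefixed formulas `(μ, σ) ψ`: a model prefix, a state prefix, a formula. -/
abbrev PrefixedFormula : Type := List ℕ × List ℕ × RML

def IsLiteral : RML → Prop
  | RML.pos _ => True
  | RML.neg _ => True
  | _ => False

/-- `Branch φ b` holds when `b` is obtained from `{(1,1) φ}` by repeatedly
applying the tableau rules. -/
inductive Branch (φ : RML) : Set PrefixedFormula → Prop
  | init : Branch φ {([1], [1], φ)}
  | andRule {b μ σ ψ₁ ψ₂} : Branch φ b → (μ, σ, RML.and ψ₁ ψ₂) ∈ b →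
      Branch φ (insert (μ, σ, ψ₁) (insert (μ, σ, ψ₂) b))
  | orLeft {b μ σ ψ₁ ψ₂} : Branch φ b → (μ, σ, RML.or ψ₁ ψ₂) ∈ b →
      Branch φ (insert (μ, σ, ψ₁) b)
  | orRight {b μ σ ψ₁ ψ₂} : Branch φ b → (μ, σ, RML.or ψ₁ ψ₂) ∈ b →
      Branch φ (insert (μ, σ, ψ₂) b)
  | litRule {b μ ν σ l} : Branch φ b → (μ ++ ν, σ, l) ∈ b → IsLiteral l →
      μ ≠ [] → ν ≠ [] → Branch φ (insert (μ, σ, l) b)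
  | diaRule {b μ σ ψ} (i : ℕ) : Branch φ b → (μ, σ, RML.dia ψ) ∈ b →
      (∀ μ' χ, (μ', σ ++ [i], χ) ∉ b) →
      Branch φ (insert (μ, σ ++ [i], ψ) b)
  | exRule {b μ σ ψ} (m : ℕ) : Branch φ b → (μ, σ, RML.ex ψ) ∈ b →
      (∀ σ' χ, (μ ++ [m], σ', χ) ∉ b) →
      Branch φ (insert (μ ++ [m], σ, ψ) b)
  | boxRule {b μ ν σ ψ i χ} : Branch φ b → (μ, σ, RML.box ψ) ∈ b →
      (μ ++ ν, σ ++ [i], χ) ∈ b →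
      Branch φ (insert (μ, σ ++ [i], ψ) b)

/-- A branch is complete when every applicable rule has been applied
exhaustively. -/
def Complete (b : Set PrefixedFormula) : Prop :=
  (∀ μ σ ψ₁ ψ₂, (μ, σ, RML.and ψ₁ ψ₂) ∈ b → (μ, σ, ψ₁) ∈ b ∧ (μ, σ, ψ₂) ∈ b) ∧
  (∀ μ σ ψ₁ ψ₂, (μ, σ, RML.or ψ₁ ψ₂) ∈ b → (μ, σ, ψ₁) ∈ b ∨ (μ, σ, ψ₂) ∈ b) ∧
  (∀ μ ν σ l, IsLiteral l → μ ≠ [] → ν ≠ [] → (μ ++ ν, σ, l) ∈ b → (μ, σ, l) ∈ b) ∧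
  (∀ μ σ ψ, (μ, σ, RML.dia ψ) ∈ b → ∃ i, (μ, σ ++ [i], ψ) ∈ b) ∧
  (∀ μ σ ψ, (μ, σ, RML.ex ψ) ∈ b → ∃ m, (μ ++ [m], σ, ψ) ∈ b) ∧
  (∀ μ ν σ i ψ χ, (μ, σ, RML.box ψ) ∈ b → (μ ++ ν, σ ++ [i], χ) ∈ b →
      (μ, σ ++ [i], ψ) ∈ b)

/-- A complete branch is accepting if it contains no clash. -/
def Accepting (b : Set PrefixedFormula) : Prop :=
  ¬ ∃ μ σ p, (μ, σ, RML.pos p) ∈ b ∧ (μ, σ, RML.neg p) ∈ b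

/-- The model extracted from a branch for model prefix `μ`. All models share
the root valuation (read off at model prefix `[1]`). -/
def auxM (b : Set PrefixedFormula) (μ : List ℕ) : Kripke (List ℕ) where
  R := fun σ τ => ∃ i ν χ, τ = σ ++ [i] ∧ (μ ++ ν, τ, χ) ∈ b
  V := fun σ => {p | ([1], σ, RML.pos p) ∈ b}

/-- Every model prefix occurring in a branch starts with `1`. -/
lemma branch_head {φ : RML} {b : Set PrefixedFormula} (hb : Branch φ b) :
    ∀ μ σ ψ, (μ, σ, ψ) ∈ b → ∃ t, μ = 1 :: t := by
  induction hb with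
  | init =>
      intro μ σ ψ h
      simp only [Set.mem_singleton_iff, Prod.mk.injEq] at h
      exact ⟨[], by simp [h.1]⟩
  | andRule _ _ ih =>
      intro μ σ ψ h
      rcases h with h | h | h
      · obtain ⟨rfl, rfl, rfl⟩ := Prod.mk.injEq .. ▸ h; exact ih _ _ _ ‹_›
      · obtain ⟨rfl, rfl, rfl⟩ := Prod.mk.injEq .. ▸ h; exact ih _ _ _ ‹_›
      · exact ih _ _ _ h
  | orLeft _ _ ih =>
      intro μ σ ψ h
      rcases h with h | h
      · obtain ⟨rfl, rfl, rfl⟩ := Prod.mk.injEq .. ▸ h; exact ih _ _ _ ‹_›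
      · exact ih _ _ _ h
  | orRight _ _ ih =>
      intro μ σ ψ h
      rcases h with h | h
      · obtain ⟨rfl, rfl, rfl⟩ := Prod.mk.injEq .. ▸ h; exact ih _ _ _ ‹_›
      · exact ih _ _ _ h
  | @litRule _ μ₀ ν₀ _ _ _ hmem _ hμ _ ih =>
      intro μ σ ψ h
      rcases h with h | h
      · obtain ⟨rfl, rfl, rfl⟩ := Prod.mk.injEq .. ▸ h
        obtain ⟨t, ht⟩ := ih _ _ _ hmem
        cases μ with
        | nil => exact absurd rfl hμ
        | cons a as =>
            refine ⟨as, ?_⟩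
            have : a = 1 := by simpa using congrArg (·.headI) ht
            rw [this]
      · exact ih _ _ _ h
  | diaRule i _ hmem _ ih =>
      intro μ σ ψ h
      rcases h with h | h
      · obtain ⟨rfl, rfl, rfl⟩ := Prod.mk.injEq .. ▸ h; exact ih _ _ _ hmem
      · exact ih _ _ _ h
  | exRule m _ hmem _ ih =>
      intro μ σ ψ h
      rcases h with h | h
      · obtain ⟨rfl, rfl, rfl⟩ := Prod.mk.injEq .. ▸ h
        obtain ⟨t, ht⟩ := ih _ _ _ hmem
        exact ⟨t ++ [m], by simp [ht]⟩
      · exact ih _ _ _ h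
  | boxRule _ hmem _ ih =>
      intro μ σ ψ h
      rcases h with h | h
      · obtain ⟨rfl, rfl, rfl⟩ := Prod.mk.injEq .. ▸ h; exact ih _ _ _ hmem
      · exact ih _ _ _ h

/-- Literals propagate to the root model prefix `[1]`. -/
lemma lit_root {b : Set PrefixedFormula} (hc : Complete b) {μ σ : List ℕ}
    {l : RML} (hl : IsLiteral l) (hμ : ∃ t, μ = 1 :: t) (h : (μ, σ, l) ∈ b) :
    ([1], σ, l) ∈ b := by
  obtain ⟨t, rfl⟩ := hμ
  cases t with
  | nil => exact h
  | cons a as => exact hc.2.2.1 [1] (a :: as) σ l hl (by simp) (by simp) h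

/-- Truth lemma. -/
lemma truth_lemma {φ : RML} {b : Set PrefixedFormula} (hb : Branch φ b)
    (hc : Complete b) (ha : Accepting b) :
    ∀ ψ μ σ, (μ, σ, ψ) ∈ b → Sat (auxM b μ) σ ψ := by
  intro ψ
  induction ψ with
  | pos p =>
      intro μ σ h
      exact lit_root hc trivial (branch_head hb _ _ _ h) h
  | neg p =>
      intro μ σ h
      have h1 : ([1], σ, RML.neg p) ∈ b :=
        lit_root hc trivial (branch_head hb _ _ _ h) h
      intro hp
      exact ha ⟨[1], σ, p, hp, h1⟩
  | and ψ₁ ψ₂ ih₁ ih₂ =>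
      intro μ σ h
      obtain ⟨h1, h2⟩ := hc.1 μ σ ψ₁ ψ₂ h
      exact ⟨ih₁ _ _ h1, ih₂ _ _ h2⟩
  | or ψ₁ ψ₂ ih₁ ih₂ =>
      intro μ σ h
      rcases hc.2.1 μ σ ψ₁ ψ₂ h with h1 | h2
      · exact Or.inl (ih₁ _ _ h1)
      · exact Or.inr (ih₂ _ _ h2)
  | dia ψ ih =>
      intro μ σ h
      obtain ⟨i, hi⟩ := hc.2.2.2.1 μ σ ψ h
      exact ⟨σ ++ [i], ⟨i, [], ψ, rfl, by simpa using hi⟩, ih _ _ hi⟩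
  | box ψ ih =>
      intro μ σ h τ hR
      obtain ⟨i, ν, χ, rfl, hmem⟩ := hR
      exact ih _ _ (hc.2.2.2.2.2 μ ν σ i ψ χ h hmem)
  | ex ψ ih =>
      intro μ σ h
      obtain ⟨m, hm⟩ := hc.2.2.2.2.1 μ σ ψ h
      refine ⟨List ℕ, auxM b (μ ++ [m]), σ, ⟨Eq, ⟨⟨σ, σ, rfl⟩, ?_, ?_⟩, rfl⟩,
        ih _ _ hm⟩
      · rintro s s' rfl; rfl
      · rintro s s' t' rfl hR
        obtain ⟨i, ν, χ, rfl, hmem⟩ := hR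
        exact ⟨s ++ [i], ⟨i, [m] ++ ν, χ, rfl,
          by simpa [List.append_assoc] using hmem⟩, rfl⟩

/-- If there exists a complete accepting tableau branch containing
the initial prefixed formula `(1,1) φ`, then `φ` is satisfiable. -/
theorem complete_accepting_branch_implies_satisfiable (φ : RML)
    (b : Set PrefixedFormula) (hb : Branch φ b) (hmem : ([1], [1], φ) ∈ b)
    (hcomplete : Complete b) (haccept : Accepting b) :
    Satisfiable φ := by
  exact ⟨List ℕ, auxM b [1], [1], truth_lemma hb hcomplete haccept φ [1] [1] hmem⟩
end

section
/- An RML^∃ formula φ is satisfiable if and only if there exists a complete accepting tableau branch starting from the initial prefixed formula (1,1) φ. -/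
namespace RMLProof

lemma branch_init_mem {φ : RML} {b : Set PrefixedFormula} (h : Branch φ b) :
    ([1],[1],φ) ∈ b := by
  induction h <;> simp_all [Set.mem_insert_iff]

lemma head_one_append {μ ν t : List ℕ} (hμ : μ ≠ []) (h : μ ++ ν = 1 :: t) :
    ∃ t', μ = 1 :: t' := by
  cases μ with
  | nil => exact absurd rfl hμ
  | cons a l => simp at h; exact ⟨l, by rw [h.1]⟩

lemma branch_head_one {φ : RML} {b : Set PrefixedFormula} (h : Branch φ b) :
    ∀ μ σ ψ, (μ, σ, ψ) ∈ b → ∃ t, μ = 1 :: t := by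
  induction h with
  | init =>
    rintro μ σ ψ hx; simp at hx; exact ⟨[], hx.1⟩
  | andRule _ hm ih =>
    rintro μ σ ψ (⟨rfl, rfl, rfl⟩ | ⟨rfl, rfl, rfl⟩ | hx)
    · exact ih _ _ _ hm
    · exact ih _ _ _ hm
    · exact ih _ _ _ hx
  | orLeft _ hm ih =>
    rintro μ σ ψ (⟨rfl, rfl, rfl⟩ | hx); exacts [ih _ _ _ hm, ih _ _ _ hx]
  | orRight _ hm ih =>
    rintro μ σ ψ (⟨rfl, rfl, rfl⟩ | hx); exacts [ih _ _ _ hm, ih _ _ _ hx]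
  | litRule _ hm _ hμ _ ih =>
    rintro μ σ ψ (⟨rfl, rfl, rfl⟩ | hx)
    · obtain ⟨t, ht⟩ := ih _ _ _ hm
      exact head_one_append hμ ht
    · exact ih _ _ _ hx
  | diaRule i _ hm _ ih =>
    rintro μ σ ψ (⟨rfl, rfl, rfl⟩ | hx); exacts [ih _ _ _ hm, ih _ _ _ hx]
  | exRule m _ hm _ ih =>
    rintro μ σ ψ (⟨rfl, rfl, rfl⟩ | hx)
    · obtain ⟨t, ht⟩ := ih _ _ _ hm
      exact ⟨t ++ [m], by rw [ht]; rfl⟩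
    · exact ih _ _ _ hx
  | boxRule _ hm _ ih =>
    rintro μ σ ψ (⟨rfl, rfl, rfl⟩ | hx); exacts [ih _ _ _ hm, ih _ _ _ hx]

/-- The canonical model extracted from a branch, one per model prefix `μ`. -/
def bR (b : Set PrefixedFormula) (μ : List ℕ) : Kripke (List ℕ) where
  R σ τ := ∃ i ν χ, τ = σ ++ [i] ∧ (μ ++ ν, τ, χ) ∈ b
  V σ := {p | ∃ μ', (μ', σ, RML.pos p) ∈ b}

lemma to_one {φ : RML} {b : Set PrefixedFormula} (hB : Branch φ b) (hC : Complete b)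
    {μ σ : List ℕ} {l : RML} (hl : IsLiteral l) (h : (μ,σ,l) ∈ b) : ([1],σ,l) ∈ b := by
  obtain ⟨t, ht⟩ := branch_head_one hB _ _ _ h
  cases t with
  | nil => rwa [ht] at h
  | cons a s =>
    refine hC.2.2.1 [1] (a :: s) σ l hl (by simp) (by simp) ?_
    rw [ht] at h; exact h

lemma truth {φ : RML} {b : Set PrefixedFormula} (hB : Branch φ b) (hC : Complete b)
    (hA : Accepting b) :
    ∀ (ψ : RML) (μ σ : List ℕ), (μ, σ, ψ) ∈ b → Sat (bR b μ) σ ψ := by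
  intro ψ
  induction ψ with
  | pos p => intro μ σ h; exact ⟨μ, h⟩
  | neg p =>
    intro μ σ h hmem
    obtain ⟨μ', h'⟩ := hmem
    exact hA ⟨[1], σ, p, to_one hB hC trivial h', to_one hB hC trivial h⟩
  | and ψ₁ ψ₂ ih₁ ih₂ =>
    intro μ σ h
    obtain ⟨h1, h2⟩ := hC.1 μ σ ψ₁ ψ₂ h
    exact ⟨ih₁ _ _ h1, ih₂ _ _ h2⟩
  | or ψ₁ ψ₂ ih₁ ih₂ =>
    intro μ σ h
    rcases hC.2.1 μ σ ψ₁ ψ₂ h with h1 | h2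
    · exact Or.inl (ih₁ _ _ h1)
    · exact Or.inr (ih₂ _ _ h2)
  | dia ψ ih =>
    intro μ σ h
    obtain ⟨i, hi⟩ := hC.2.2.2.1 μ σ ψ h
    exact ⟨σ ++ [i], ⟨i, [], ψ, rfl, by simpa using hi⟩, ih _ _ hi⟩
  | box ψ ih =>
    intro μ σ h t ht
    obtain ⟨i, ν, χ, rfl, hocc⟩ := ht
    exact ih _ _ (hC.2.2.2.2.2 μ ν σ i ψ χ h hocc)
  | ex ψ ih =>
    intro μ σ h
    obtain ⟨m, hm⟩ := hC.2.2.2.2.1 μ σ ψ h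
    refine ⟨List ℕ, bR b (μ ++ [m]), σ, ⟨Eq, ⟨⟨σ, σ, rfl⟩, ?_, ?_⟩, rfl⟩, ih _ _ hm⟩
    · rintro s _ rfl; rfl
    · rintro s _ t' rfl ⟨i, ν, χ, rfl, hocc⟩
      exact ⟨s ++ [i], ⟨i, [m] ++ ν, χ, rfl, by simpa [List.append_assoc] using hocc⟩, rfl⟩

lemma backward {φ : RML} {b : Set PrefixedFormula} (hB : Branch φ b) (hC : Complete b)
    (hA : Accepting b) : Satisfiable φ :=
  ⟨List ℕ, bR b [1], [1], truth hB hC hA φ [1] [1] (branch_init_mem hB)⟩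

end RMLProof
namespace RMLProof

/-- A pointed Kripke model. -/
structure PM where
  W : Type
  M : Kripke W
  pt : W

def PM.sat (x : PM) (ψ : RML) : Prop := Sat x.M x.pt ψ

/-- `x` is a (pointed) refinement of `y`. -/
def Refines (x y : PM) : Prop := RefinementOf x.M x.pt y.M y.pt

/-- `y` is obtained from `x` by moving the point along an edge. -/
def StepPM (x y : PM) : Prop := ∃ t : x.W, x.M.R x.pt t ∧ y = ⟨x.W, x.M, t⟩

lemma Refines.refl (x : PM) : Refines x x := by
  refine ⟨Eq, ⟨⟨x.pt, x.pt, rfl⟩, ?_, ?_⟩, rfl⟩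
  · rintro s _ rfl; rfl
  · rintro s _ t' rfl h; exact ⟨t', h, rfl⟩

lemma Refines.trans {x y z : PM} (hxy : Refines x y) (hyz : Refines y z) : Refines x z := by
  obtain ⟨ρ, ⟨-, hat, hbk⟩, hpt⟩ := hxy
  obtain ⟨ρ', ⟨-, hat', hbk'⟩, hpt'⟩ := hyz
  refine ⟨fun c a => ∃ bb, ρ' c bb ∧ ρ bb a, ⟨⟨z.pt, x.pt, y.pt, hpt', hpt⟩, ?_, ?_⟩,
    y.pt, hpt', hpt⟩
  · rintro s s' ⟨bb, h1, h2⟩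
    rw [hat' _ _ h1, hat _ _ h2]
  · rintro s s' t' ⟨bb, h1, h2⟩ hR
    obtain ⟨tb, hRb, h3⟩ := hbk _ _ _ h2 hR
    obtain ⟨tc, hRc, h4⟩ := hbk' _ _ _ h1 hRb
    exact ⟨tc, hRc, tb, h4, h3⟩

lemma Refines.V_eq {x y : PM} (h : Refines x y) : y.M.V y.pt = x.M.V x.pt := by
  obtain ⟨ρ, ⟨-, hat, -⟩, hpt⟩ := h
  exact hat _ _ hpt

lemma Refines.sat_lit {x y : PM} {l : RML} (hl : IsLiteral l) (h : Refines x y) :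
    y.sat l ↔ x.sat l := by
  cases l with
  | pos p =>
    show _ ∈ y.M.V y.pt ↔ _ ∈ x.M.V x.pt
    rw [h.V_eq]
  | neg p =>
    show _ ∉ y.M.V y.pt ↔ _ ∉ x.M.V x.pt
    rw [h.V_eq]
  | and a c => exact hl.elim
  | or a c => exact hl.elim
  | dia a => exact hl.elim
  | box a => exact hl.elim
  | ex a => exact hl.elim

lemma Refines.back {x y : PM} (h : Refines x y) {t : x.W} (ht : x.M.R x.pt t) :
    ∃ u : y.W, y.M.R y.pt u ∧ Refines ⟨x.W, x.M, t⟩ ⟨y.W, y.M, u⟩ := by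
  obtain ⟨ρ, ⟨hne, hat, hbk⟩, hpt⟩ := h
  obtain ⟨u, hu, hρ⟩ := hbk _ _ _ hpt ht
  exact ⟨u, hu, ρ, ⟨hne, hat, hbk⟩, hρ⟩

lemma StepPM.sat_box {x y : PM} {ψ : RML} (h : StepPM x y) (hx : x.sat (RML.box ψ)) :
    y.sat ψ := by
  obtain ⟨t, ht, rfl⟩ := h
  exact hx t ht

lemma sat_ex_elim {x : PM} {ψ : RML} (h : x.sat (RML.ex ψ)) :
    ∃ y : PM, Refines y x ∧ y.sat ψ := by
  obtain ⟨W', M', s', href, hsat⟩ := h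
  exact ⟨⟨W', M', s'⟩, href, hsat⟩

end RMLProof
namespace RMLProof

/-! ### Sizes and literals -/

def sz : RML → ℕ
  | .pos _ => 1
  | .neg _ => 1
  | .and a b => sz a + sz b + 1
  | .or a b => sz a + sz b + 1
  | .dia a => sz a + 1
  | .box a => sz a + 1
  | .ex a => sz a + 1

def md : RML → ℕ
  | .pos _ => 0
  | .neg _ => 0
  | .and a b => max (md a) (md b)
  | .or a b => max (md a) (md b)
  | .dia a => md a + 1
  | .box a => md a + 1
  | .ex a => md a

def isLit : RML → Bool
  | .pos _ => true
  | .neg _ => true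
  | _ => false

lemma isLit_iff {ψ : RML} : isLit ψ = true ↔ IsLiteral ψ := by
  cases ψ <;> simp [isLit, IsLiteral]

lemma one_le_sz (ψ : RML) : 1 ≤ sz ψ := by
  cases ψ <;> simp [sz] <;> omega

lemma md_le_sz (ψ : RML) : md ψ ≤ sz ψ := by
  induction ψ <;> simp [md, sz] <;> omega

/-! ### Literal-closure lists -/

def pclList (μ σ : List ℕ) (l : RML) : List PrefixedFormula :=
  (List.range μ.length).map fun j => (μ.take (j+1), σ, l)

def addb (μ σ : List ℕ) (ψ : RML) : List PrefixedFormula :=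
  if isLit ψ then pclList μ σ ψ else [(μ, σ, ψ)]

def addp (μ σ : List ℕ) (ψ : RML) : List PrefixedFormula :=
  if isLit ψ then [] else [(μ, σ, ψ)]

lemma mem_pclList {x : PrefixedFormula} {μ σ l} :
    x ∈ pclList μ σ l ↔ ∃ j < μ.length, x = (μ.take (j+1), σ, l) := by
  simp [pclList, eq_comm]

lemma self_mem_pclList {μ σ l} (hμ : μ ≠ []) : (μ, σ, l) ∈ pclList μ σ l := by
  rw [mem_pclList]
  refine ⟨μ.length - 1, ?_, ?_⟩
  · have := List.length_pos_iff.mpr hμ; omega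
  · have : μ.length - 1 + 1 = μ.length := by
      have := List.length_pos_iff.mpr hμ; omega
    rw [this, List.take_length]

lemma self_mem_addb {μ σ ψ} (hμ : μ ≠ []) : (μ, σ, ψ) ∈ addb μ σ ψ := by
  unfold addb; split
  · exact self_mem_pclList hμ
  · simp

lemma mem_addb {x : PrefixedFormula} {μ σ ψ} (hμ : μ ≠ []) (hx : x ∈ addb μ σ ψ) :
    x.1 ≠ [] ∧ x.1 <+: μ ∧ x.2.1 = σ ∧ x.2.2 = ψ := by
  unfold addb at hx; split at hx
  · rw [mem_pclList] at hx
    obtain ⟨j, hj, rfl⟩ := hx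
    refine ⟨?_, List.take_prefix _ _, rfl, rfl⟩
    simp [hμ]
  · simp at hx; subst hx; exact ⟨hμ, List.prefix_refl μ, rfl, rfl⟩

lemma mem_addp {x : PrefixedFormula} {μ σ ψ} (hx : x ∈ addp μ σ ψ) :
    x = (μ, σ, ψ) ∧ ¬ IsLiteral ψ := by
  unfold addp at hx; split at hx <;> rename_i h
  · simp at hx
  · simpa [← isLit_iff, h] using hx

lemma addp_sub_addb {μ σ ψ} (hμ : μ ≠ []) {x} (hx : x ∈ addp μ σ ψ) : x ∈ addb μ σ ψ := by
  obtain ⟨rfl, -⟩ := mem_addp hx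
  exact self_mem_addb hμ

/-! ### Branch extension with literal closure -/

lemma set_cons (a : PrefixedFormula) (l : List PrefixedFormula) :
    {x | x ∈ a :: l} = insert a {x | x ∈ l} := by
  ext x; simp [Set.mem_insert_iff]

lemma branch_litClosure {φ : RML} {s : Set PrefixedFormula} {μ σ : List ℕ} {l : RML}
    (hB : Branch φ s) (hmem : (μ,σ,l) ∈ s) (hl : IsLiteral l) (hμ : μ ≠ []) :
    Branch φ (s ∪ {x | x ∈ pclList μ σ l}) := by
  have key : ∀ m : ℕ, Branch φ (s ∪ {x | x ∈ (List.range m).map fun j => ((μ.take (j+1) : List ℕ), σ, l)}) := by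
    intro m
    induction m with
    | zero => simpa using hB
    | succ m ih =>
      have hsplit : {x | x ∈ (List.range (m+1)).map fun j => ((μ.take (j+1) : List ℕ), σ, l)}
          = insert (μ.take (m+1), σ, l) {x | x ∈ (List.range m).map fun j => ((μ.take (j+1) : List ℕ), σ, l)} := by
        ext x; simp [List.range_succ, Set.mem_insert_iff, or_comm]
      rw [hsplit, Set.union_insert]
      by_cases hd : μ.drop (m+1) = []
      · have htk : μ.take (m+1) = μ := by
          conv_rhs => rw [← List.take_append_drop (m+1) μ]
          rw [hd, List.append_nil]
        rw [htk, Set.insert_eq_self.mpr (Set.mem_union_left _ hmem)]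
        exact ih
      · have hpre : (μ.take (m+1) ++ μ.drop (m+1), σ, l) ∈ s ∪ {x | x ∈ (List.range m).map fun j => ((μ.take (j+1) : List ℕ), σ, l)} := by
          rw [List.take_append_drop]; exact Set.mem_union_left _ hmem
        exact Branch.litRule ih hpre hl (by simp [hμ]) hd
  exact key μ.length

lemma branch_addb {φ : RML} {S : Set PrefixedFormula} {μ σ : List ℕ} {ψ : RML}
    (hB : Branch φ (insert (μ,σ,ψ) S)) (hμ : μ ≠ []) :
    Branch φ ({x | x ∈ addb μ σ ψ} ∪ S) := by
  unfold addb; split <;> rename_i h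
  · have h2 := branch_litClosure hB (Set.mem_insert _ _) (isLit_iff.mp h) hμ
    have : insert (μ,σ,ψ) S ∪ {x | x ∈ pclList μ σ ψ} = {x | x ∈ pclList μ σ ψ} ∪ S := by
      ext x
      simp only [Set.mem_union, Set.mem_insert_iff, Set.mem_setOf_eq]
      constructor
      · rintro ((rfl | hx) | hx)
        · exact Or.inl (self_mem_pclList hμ)
        · exact Or.inr hx
        · exact Or.inl hx
      · rintro (hx | hx)
        · exact Or.inr hx
        · exact Or.inl (Or.inr hx)
    rwa [this] at h2
  · have : {x | x ∈ [(μ,σ,ψ)]} ∪ S = insert (μ,σ,ψ) S := by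
      ext x; simp [Set.mem_insert_iff]
    rwa [this]

end RMLProof
namespace RMLProof

lemma prefix_single {π : List ℕ} {a : ℕ} (h : π <+: [a]) : π = [] ∨ π = [a] := by
  rcases (List.prefix_concat_iff (l₂ := ([] : List ℕ))).mp (by simpa using h) with h1 | h1
  · right; simpa using h1
  · left; simpa using h1

/-- Pulling an edge back along a chain of refinements. -/
lemma chain (g : List ℕ → PM) :
    ∀ (μ : List ℕ), μ ≠ [] →
    (∀ π π', π ≠ [] → π <+: π' → π' <+: μ → Refines (g π') (g π)) →
    ∀ (t : (g μ).W), (g μ).M.R (g μ).pt t →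
    ∃ f : List ℕ → PM, f μ = ⟨(g μ).W, (g μ).M, t⟩ ∧
      (∀ π, π ≠ [] → π <+: μ → StepPM (g π) (f π)) ∧
      (∀ π π', π ≠ [] → π <+: π' → π' <+: μ → Refines (f π') (f π)) := by
  intro μ
  induction μ using List.reverseRecOn with
  | nil => intro h; exact absurd rfl h
  | append_singleton μ₀ a ih =>
    intro _ href t ht
    rcases eq_or_ne μ₀ [] with rfl | hμ₀
    · refine ⟨fun _ => ⟨(g [a]).W, (g [a]).M, t⟩, rfl, ?_, ?_⟩
      · intro π hπ hpre
        rcases prefix_single (by simpa using hpre) with rfl | rfl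
        · exact absurd rfl hπ
        · exact ⟨t, by simpa using ht, rfl⟩
      · intro π π' hπ hpre hpre'
        exact Refines.refl _
    · have hr : Refines (g (μ₀ ++ [a])) (g μ₀) :=
        href μ₀ (μ₀ ++ [a]) hμ₀ (by simp) (List.prefix_refl _)
      obtain ⟨u, hu, hru⟩ := hr.back ht
      obtain ⟨f₀, hf₀, hstep₀, href₀⟩ := ih hμ₀
        (fun π π' hπ h1 h2 => href π π' hπ h1 (h2.trans (by simp))) u hu
      classical
      refine ⟨fun π => if π = μ₀ ++ [a] then ⟨(g (μ₀ ++ [a])).W, (g (μ₀ ++ [a])).M, t⟩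
        else f₀ π, by simp, ?_, ?_⟩
      · intro π hπ hpre
        dsimp only
        rcases List.prefix_concat_iff.mp hpre with rfl | hpre₀
        · simpa using ⟨t, ht, rfl⟩
        · have hne : π ≠ μ₀ ++ [a] := by
            intro h; rw [h] at hpre₀
            have := hpre₀.length_le; simp at this
          simpa [hne] using hstep₀ π hπ hpre₀
      · intro π π' hπ hpre hpre'
        dsimp only
        rcases List.prefix_concat_iff.mp hpre' with rfl | hpre₀'
        · simp only [if_pos rfl]
          rcases List.prefix_concat_iff.mp hpre with rfl | hpre₀
          · simpa using Refines.refl _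
          · have hne : π ≠ μ₀ ++ [a] := by
              intro h; rw [h] at hpre₀
              have := hpre₀.length_le; simp at this
            rw [if_neg hne]
            have h1 : Refines ⟨(g (μ₀ ++ [a])).W, (g (μ₀ ++ [a])).M, t⟩ (f₀ μ₀) := by
              rw [hf₀]; exact hru
            exact h1.trans (href₀ π μ₀ hπ hpre₀ (List.prefix_refl _))
        · have hne' : π' ≠ μ₀ ++ [a] := by
            intro h; rw [h] at hpre₀'
            have := hpre₀'.length_le; simp at this
          have hne : π ≠ μ₀ ++ [a] := by
            intro h
            have := (h ▸ hpre).length_le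
            have := hpre.trans hpre₀'
            rw [h] at this
            have := this.length_le; simp at this
          rw [if_neg hne, if_neg hne']
          exact href₀ π π' hπ hpre hpre₀'

end RMLProof
namespace RMLProof

/-! ### Termination measure -/

def RK (φ : RML) : ℕ := sz φ + (sz φ + 1) * (md φ + 1) + 1

def rank (φ : RML) (x : PrefixedFormula) : ℕ :=
  sz x.2.2 + (sz φ + 1) * (md φ + 1 - x.2.1.length)

def msr (φ : RML) (P : List PrefixedFormula) : Lex (Fin (RK φ) → ℕ) :=
  toLex fun k => P.countP fun x => decide (rank φ x = RK φ - 1 - (k : ℕ))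

lemma rank_lt_RK {φ : RML} {x : PrefixedFormula} (h : sz x.2.2 ≤ sz φ) :
    rank φ x < RK φ := by
  unfold rank RK
  have h1 : md φ + 1 - x.2.1.length ≤ md φ + 1 := by omega
  have h2 : (sz φ + 1) * (md φ + 1 - x.2.1.length) ≤ (sz φ + 1) * (md φ + 1) :=
    Nat.mul_le_mul_left _ h1
  omega

lemma msr_lt {φ : RML} {x : PrefixedFormula} {P' A : List PrefixedFormula}
    (hx : sz x.2.2 ≤ sz φ) (hA : ∀ a ∈ A, rank φ a < rank φ x) :
    msr φ (A ++ P') < msr φ (x :: P') := by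
  have hrk := rank_lt_RK hx
  refine ⟨⟨RK φ - 1 - rank φ x, by omega⟩, ?_, ?_⟩
  · intro j hj
    have hj' : (j : ℕ) < RK φ - 1 - rank φ x := hj
    simp only [msr, Pi.toLex_apply, List.countP_append, List.countP_cons]
    have hxne : ¬ (rank φ x = RK φ - 1 - (j : ℕ)) := by omega
    have hAz : (A.countP fun a => decide (rank φ a = RK φ - 1 - (j : ℕ))) = 0 := by
      rw [List.countP_eq_zero]
      intro a ha
      have := hA a ha
      simp only [decide_eq_true_eq]
      omega
    simp [hAz, hxne]
  · simp only [msr, Pi.toLex_apply, List.countP_append, List.countP_cons]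
    have hi : RK φ - 1 - ((⟨RK φ - 1 - rank φ x, by omega⟩ : Fin (RK φ)) : ℕ) = rank φ x := by
      simp; omega
    rw [hi]
    have hAz : (A.countP fun a => decide (rank φ a = rank φ x)) = 0 := by
      rw [List.countP_eq_zero]
      intro a ha
      have := hA a ha
      simp only [decide_eq_true_eq]
      omega
    simp [hAz]

/-! ### Children and box lists -/

def isChild (σ τ : List ℕ) : Prop := σ <+: τ ∧ τ.length = σ.length + 1

instance (σ τ : List ℕ) : Decidable (isChild σ τ) := by unfold isChild; infer_instance

lemma isChild_iff {σ τ : List ℕ} : isChild σ τ ↔ ∃ i, τ = σ ++ [i] := by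
  constructor
  · rintro ⟨⟨r, rfl⟩, hlen⟩
    simp only [List.length_append] at hlen
    obtain ⟨i, rfl⟩ := List.length_eq_one_iff.mp (by omega : r.length = 1)
    exact ⟨i, rfl⟩
  · rintro ⟨i, rfl⟩; exact ⟨⟨[i], rfl⟩, by simp⟩

def boxList (b : List PrefixedFormula) (μ σ : List ℕ) : List (List ℕ × RML) :=
  b.filterMap fun z => match z with
    | (μ₀, σ₀, RML.box χ) => if σ₀ = σ ∧ μ₀ <+: μ then some (μ₀, χ) else none
    | _ => none

lemma mem_boxList {b : List PrefixedFormula} {μ σ : List ℕ} {w : List ℕ × RML} :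
    w ∈ boxList b μ σ ↔ (w.1, σ, RML.box w.2) ∈ b ∧ w.1 <+: μ := by
  unfold boxList
  rw [List.mem_filterMap]
  constructor
  · rintro ⟨⟨μ₀, σ₀, χ⟩, hz, hf⟩
    cases χ <;> dsimp only at hf <;> try exact absurd hf.symm (Option.some_ne_none _)
    case box χ =>
      by_cases hcond : σ₀ = σ ∧ μ₀ <+: μ
      · rw [if_pos hcond] at hf
        injection hf with h
        obtain ⟨rfl, hpre⟩ := hcond
        subst h
        exact ⟨hz, hpre⟩
      · rw [if_neg hcond] at hf
        exact absurd hf (by simp)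
  · rintro ⟨hz, hpre⟩
    exact ⟨(w.1, σ, RML.box w.2), hz, by simp [hpre]⟩

def chList (b : List PrefixedFormula) (μ σ : List ℕ) : List PrefixedFormula :=
  b.filter fun z => decide (μ <+: z.1) && decide (isChild σ z.2.1)

lemma mem_chList {b : List PrefixedFormula} {μ σ : List ℕ} {z : PrefixedFormula} :
    z ∈ chList b μ σ ↔ z ∈ b ∧ μ <+: z.1 ∧ isChild σ z.2.1 := by
  unfold chList
  rw [List.mem_filter]
  simp [and_assoc]

/-! ### Folding box applications into a branch -/

lemma branch_fold_box {φ : RML} {μ σ : List ℕ} {ψ : RML} (hμ : μ ≠ []) :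
    ∀ (L : List PrefixedFormula) (bS : Set PrefixedFormula),
    (μ, σ, RML.box ψ) ∈ bS →
    (∀ z ∈ L, z ∈ bS ∧ μ <+: z.1 ∧ isChild σ z.2.1) →
    Branch φ bS →
    Branch φ ({x | x ∈ (L.map fun z => addb μ z.2.1 ψ).flatten} ∪ bS) := by
  intro L
  induction L with
  | nil => intro bS _ _ hB; simpa using hB
  | cons z L ih =>
    intro bS hbox hz hB
    have hB' := ih bS hbox (fun w hw => hz w (List.mem_cons_of_mem _ hw)) hB
    obtain ⟨hzb, hzpre, hchild⟩ := hz z (List.mem_cons_self)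
    obtain ⟨i, hi⟩ := isChild_iff.mp hchild
    obtain ⟨ν, hν⟩ := hzpre
    set S' := {x | x ∈ (L.map fun z => addb μ z.2.1 ψ).flatten} ∪ bS with hS'
    have hobx : (μ, σ, RML.box ψ) ∈ S' := Set.mem_union_right _ hbox
    have hocc : (μ ++ ν, σ ++ [i], z.2.2) ∈ S' := by
      refine Set.mem_union_right _ ?_
      rw [hν, ← hi]
      simpa using hzb
    have h2 := Branch.boxRule hB' hobx hocc
    have h3 := branch_addb h2 hμ
    have heq : {x | x ∈ addb μ (σ ++ [i]) ψ} ∪ S'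
        = {x | x ∈ ((z :: L).map fun z => addb μ z.2.1 ψ).flatten} ∪ bS := by
      rw [hS', ← hi]
      ext x
      simp only [Set.mem_union, Set.mem_setOf_eq, List.mem_flatten, List.map_cons,
        List.mem_cons, List.mem_map]
      constructor
      · rintro (hx | ⟨⟨l, hl, hxl⟩ | hx⟩)
        · exact Or.inl ⟨addb μ z.2.1 ψ, Or.inl rfl, hx⟩
        · exact Or.inl ⟨l, Or.inr hl, hxl⟩
        · exact Or.inr hx
      · rintro (⟨l, (rfl | hl), hxl⟩ | hx)
        · exact Or.inl hxl
        · exact Or.inr (Or.inl ⟨l, hl, hxl⟩)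
        · exact Or.inr (Or.inr hx)
    rwa [heq] at h3

lemma branch_fold_res {φ : RML} {μ σ : List ℕ} {i : ℕ} {ψ : RML} :
    ∀ (L : List (List ℕ × RML)) (bS : Set PrefixedFormula),
    (μ, σ ++ [i], ψ) ∈ bS →
    (∀ z ∈ L, (z.1, σ, RML.box z.2) ∈ bS ∧ z.1 ≠ [] ∧ z.1 <+: μ) →
    Branch φ bS →
    Branch φ ({x | x ∈ (L.map fun z => addb z.1 (σ ++ [i]) z.2).flatten} ∪ bS) := by
  intro L
  induction L with
  | nil => intro bS _ _ hB; simpa using hB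
  | cons z L ih =>
    intro bS hocc hz hB
    have hB' := ih bS hocc (fun w hw => hz w (List.mem_cons_of_mem _ hw)) hB
    obtain ⟨hzb, hzne, hzpre⟩ := hz z (List.mem_cons_self)
    obtain ⟨ν, hν⟩ := hzpre
    set S' := {x | x ∈ (L.map fun z => addb z.1 (σ ++ [i]) z.2).flatten} ∪ bS with hS'
    have hobx : (z.1, σ, RML.box z.2) ∈ S' := Set.mem_union_right _ hzb
    have hocc' : (z.1 ++ ν, σ ++ [i], ψ) ∈ S' := by
      rw [hν]; exact Set.mem_union_right _ hocc
    have h2 := Branch.boxRule hB' hobx hocc'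
    have h3 := branch_addb h2 hzne
    have heq : {x | x ∈ addb z.1 (σ ++ [i]) z.2} ∪ S'
        = {x | x ∈ ((z :: L).map fun z => addb z.1 (σ ++ [i]) z.2).flatten} ∪ bS := by
      rw [hS']
      ext x
      simp only [Set.mem_union, Set.mem_setOf_eq, List.mem_flatten, List.map_cons,
        List.mem_cons, List.mem_map]
      constructor
      · rintro (hx | ⟨⟨l, hl, hxl⟩ | hx⟩)
        · exact Or.inl ⟨addb z.1 (σ ++ [i]) z.2, Or.inl rfl, hx⟩
        · exact Or.inl ⟨l, Or.inr hl, hxl⟩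
        · exact Or.inr hx
      · rintro (⟨l, (rfl | hl), hxl⟩ | hx)
        · exact Or.inl hxl
        · exact Or.inr (Or.inl ⟨l, hl, hxl⟩)
        · exact Or.inr (Or.inr hx)
    rwa [heq] at h3

end RMLProof
namespace RMLProof

/-! ### Small helpers -/

lemma ne_nil_of_prefix {π π' : List ℕ} (h : π ≠ []) (hp : π <+: π') : π' ≠ [] := by
  rintro rfl; exact h (List.prefix_nil.mp hp)

lemma mem_pclList_of_prefix {μ₀ μ σ : List ℕ} {l : RML} (h0 : μ₀ ≠ []) (h : μ₀ <+: μ) :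
    (μ₀, σ, l) ∈ pclList μ σ l := by
  rw [mem_pclList]
  have hlen : 1 ≤ μ₀.length := List.length_pos_iff.mpr h0
  have hle : μ₀.length ≤ μ.length := h.length_le
  refine ⟨μ₀.length - 1, by omega, ?_⟩
  have : μ₀.length - 1 + 1 = μ₀.length := by omega
  rw [this, ← List.prefix_iff_eq_take.mp h]

lemma mem_of_mem_cons_of_ne {α : Type*} {y x : α} {l : List α} (h : y ∈ x :: l)
    (hne : y ≠ x) : y ∈ l := by
  rcases List.mem_cons.mp h with rfl | h
  · exact absurd rfl hne
  · exact h

lemma mem_addb' {x : PrefixedFormula} {μ σ ψ} (hμ : μ ≠ []) (hx : x ∈ addb μ σ ψ) :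
    x.2.1 = σ ∧ x.2.2 = ψ ∧ x.1 ≠ [] ∧ x.1 <+: μ := by
  obtain ⟨h1, h2, h3, h4⟩ := mem_addb hμ hx
  exact ⟨h3, h4, h1, h2⟩

lemma addb_nonlit {μ σ : List ℕ} {ψ : RML} (h : ¬ IsLiteral ψ) :
    addb μ σ ψ = [(μ, σ, ψ)] := by
  unfold addb
  rw [if_neg (by rw [isLit_iff]; exact h)]

lemma mem_addb_lit {x : PrefixedFormula} {μ σ : List ℕ} {ψ : RML} (hl : IsLiteral ψ)
    (hx : x ∈ addb μ σ ψ) : x ∈ pclList μ σ ψ := by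
  unfold addb at hx
  rwa [if_pos (isLit_iff.mpr hl)] at hx

lemma sat_addb_gen {F : List ℕ → PM} {μ σ : List ℕ} {ψ : RML} (hμ : μ ≠ [])
    (hrefF : ∀ π, π ≠ [] → π <+: μ → Refines (F μ) (F π))
    (hsat : (F μ).sat ψ) :
    ∀ y ∈ addb μ σ ψ, (F y.1).sat y.2.2 := by
  intro y hy
  unfold addb at hy
  split at hy <;> rename_i hl
  · rw [mem_pclList] at hy
    obtain ⟨j, hj, rfl⟩ := hy
    have hne : μ.take (j+1) ≠ [] := by simp [hμ]
    have hpre : μ.take (j+1) <+: μ := List.take_prefix _ _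
    exact (Refines.sat_lit (isLit_iff.mp hl) (hrefF _ hne hpre)).mpr hsat
  · simp at hy; subst hy; exact hsat

lemma rank_lt_same {φ : RML} {μ' μ σ : List ℕ} {χ ψ : RML} (h : sz χ < sz ψ) :
    rank φ (μ', σ, χ) < rank φ (μ, σ, ψ) := by
  unfold rank; simp only; omega

lemma rank_lt_deep {φ : RML} {μ' μ σ : List ℕ} {i : ℕ} {χ ψ : RML}
    (hsz : sz χ ≤ sz φ) (hψ : 1 ≤ sz ψ) (hσ : σ.length < md φ + 1) :
    rank φ (μ', σ ++ [i], χ) < rank φ (μ, σ, ψ) := by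
  unfold rank
  simp only [List.length_append, List.length_singleton]
  have he : md φ + 1 - (σ.length + 1) + 1 = md φ + 1 - σ.length := by omega
  have : (sz φ + 1) * (md φ + 1 - σ.length)
      = (sz φ + 1) * (md φ + 1 - (σ.length + 1)) + (sz φ + 1) := by
    rw [← he, Nat.mul_succ]
  omega


lemma addp_nonlit {μ σ : List ℕ} {ψ : RML} (h : ¬ IsLiteral ψ) :
    addp μ σ ψ = [(μ, σ, ψ)] := by
  unfold addp
  rw [if_neg (by rw [isLit_iff]; exact h)]

lemma mem_addb_of_lit {μ₀ μ σ : List ℕ} {ψ : RML} (hl : IsLiteral ψ) (h0 : μ₀ ≠ [])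
    (hpre : μ₀ <+: μ) : (μ₀, σ, ψ) ∈ addb μ σ ψ := by
  unfold addb
  rw [if_pos (isLit_iff.mpr hl)]
  exact mem_pclList_of_prefix h0 hpre

/-! ### The invariant -/

structure Inv (φ : RML) (P b : List PrefixedFormula) (n : ℕ)
    (𝔐 : List ℕ → List ℕ → PM) (U : List ℕ → List ℕ → Prop) : Prop where
  branch : Branch φ {x | x ∈ b}
  psub : ∀ x ∈ P, x ∈ b
  szb : ∀ x ∈ b, sz x.2.2 ≤ sz φ
  mdb : ∀ x ∈ b, md x.2.2 + x.2.1.length ≤ md φ + 1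
  bound : ∀ x ∈ b, (∀ k ∈ x.1, k < n) ∧ (∀ k ∈ x.2.1, k < n)
  uBound : ∀ μ σ, U μ σ → (∀ k ∈ μ, k < n) ∧ (∀ k ∈ σ, k < n)
  inU : ∀ x ∈ b, U x.1 x.2.1
  uNe : ∀ μ σ, U μ σ → μ ≠ []
  uPre : ∀ μ₀ μ σ, U μ σ → μ₀ ≠ [] → μ₀ <+: μ → U μ₀ σ
  sat : ∀ x ∈ b, (𝔐 x.1 x.2.1).sat x.2.2
  refc : ∀ μ μ' σ, U μ σ → U μ' σ → μ <+: μ' → Refines (𝔐 μ' σ) (𝔐 μ σ)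
  vert : ∀ μ σ i, U μ σ → U μ (σ ++ [i]) → StepPM (𝔐 μ σ) (𝔐 μ (σ ++ [i]))
  cAnd : ∀ μ σ ψ₁ ψ₂, (μ,σ,RML.and ψ₁ ψ₂) ∈ b →
    ((μ,σ,ψ₁) ∈ b ∧ (μ,σ,ψ₂) ∈ b) ∨ (μ,σ,RML.and ψ₁ ψ₂) ∈ P
  cOr : ∀ μ σ ψ₁ ψ₂, (μ,σ,RML.or ψ₁ ψ₂) ∈ b →
    ((μ,σ,ψ₁) ∈ b ∨ (μ,σ,ψ₂) ∈ b) ∨ (μ,σ,RML.or ψ₁ ψ₂) ∈ P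
  cLit : ∀ μ ν σ l, IsLiteral l → μ ≠ [] → ν ≠ [] → (μ ++ ν, σ, l) ∈ b → (μ,σ,l) ∈ b
  cDia : ∀ μ σ ψ, (μ,σ,RML.dia ψ) ∈ b → (∃ i, (μ,σ++[i],ψ) ∈ b) ∨ (μ,σ,RML.dia ψ) ∈ P
  cEx : ∀ μ σ ψ, (μ,σ,RML.ex ψ) ∈ b → (∃ m, (μ++[m],σ,ψ) ∈ b) ∨ (μ,σ,RML.ex ψ) ∈ P
  cBox : ∀ μ ν σ i ψ χ, (μ,σ,RML.box ψ) ∈ b → (μ++ν,σ++[i],χ) ∈ b →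
    (μ,σ++[i],ψ) ∈ b ∨ (μ,σ,RML.box ψ) ∈ P

lemma main (φ : RML) :
    ∀ (m : Lex (Fin (RK φ) → ℕ)) (P b : List PrefixedFormula) (n : ℕ)
      (𝔐 : List ℕ → List ℕ → PM) (U : List ℕ → List ℕ → Prop),
      msr φ P = m → Inv φ P b n 𝔐 U →
      ∃ b' : Set PrefixedFormula, Branch φ b' ∧ Complete b' ∧ Accepting b' := by
  have wf : WellFounded ((· < ·) : Lex (Fin (RK φ) → ℕ) → Lex (Fin (RK φ) → ℕ) → Prop) :=
    IsWellFounded.wf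
  intro m
  refine wf.induction (C := fun m => ∀ P b n 𝔐 U, msr φ P = m → Inv φ P b n 𝔐 U →
      ∃ b' : Set PrefixedFormula, Branch φ b' ∧ Complete b' ∧ Accepting b') m ?_
  clear m
  rintro m IH P b n 𝔐 U rfl hInv
  cases P with
  | nil =>
    refine ⟨{x | x ∈ b}, hInv.branch, ⟨?_, ?_, ?_, ?_, ?_, ?_⟩, ?_⟩
    · intro μ σ ψ₁ ψ₂ h
      rcases hInv.cAnd μ σ ψ₁ ψ₂ h with h | h
      · exact h
      · simp at h
    · intro μ σ ψ₁ ψ₂ h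
      rcases hInv.cOr μ σ ψ₁ ψ₂ h with h | h
      · exact h
      · simp at h
    · exact fun μ ν σ l hl hμ hν h => hInv.cLit μ ν σ l hl hμ hν h
    · intro μ σ ψ h
      rcases hInv.cDia μ σ ψ h with h | h
      · exact h
      · simp at h
    · intro μ σ ψ h
      rcases hInv.cEx μ σ ψ h with h | h
      · exact h
      · simp at h
    · intro μ ν σ i ψ χ h hocc
      rcases hInv.cBox μ ν σ i ψ χ h hocc with h | h
      · exact h
      · simp at h
    · rintro ⟨μ, σ, p, h1, h2⟩
      exact (hInv.sat _ h2) (hInv.sat _ h1)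
  | cons x P' =>
    obtain ⟨μ, σ, ψ⟩ := x
    have hxb : (μ,σ,ψ) ∈ b := hInv.psub _ (List.mem_cons_self)
    have hUx : U μ σ := hInv.inU _ hxb
    have hμ : μ ≠ [] := hInv.uNe _ _ hUx
    have hsat : (𝔐 μ σ).sat ψ := hInv.sat _ hxb
    have hszx : sz (μ,σ,ψ).2.2 ≤ sz φ := hInv.szb _ hxb
    have hmdx : md ψ + σ.length ≤ md φ + 1 := hInv.mdb _ hxb
    cases ψ with
    | pos p =>
      refine IH (msr φ P') (msr_lt (A := []) hszx (by simp)) P' b n 𝔐 U rfl ?_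
      refine ⟨hInv.branch, fun y hy => hInv.psub y (List.mem_cons_of_mem _ hy),
        hInv.szb, hInv.mdb, hInv.bound, hInv.uBound, hInv.inU, hInv.uNe, hInv.uPre,
        hInv.sat, hInv.refc, hInv.vert, ?_, ?_, hInv.cLit, ?_, ?_, ?_⟩
      · intro μ' σ' ψ₁ ψ₂ h
        rcases hInv.cAnd μ' σ' ψ₁ ψ₂ h with h | h
        · exact Or.inl h
        · exact Or.inr (mem_of_mem_cons_of_ne h (by simp))
      · intro μ' σ' ψ₁ ψ₂ h
        rcases hInv.cOr μ' σ' ψ₁ ψ₂ h with h | h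
        · exact Or.inl h
        · exact Or.inr (mem_of_mem_cons_of_ne h (by simp))
      · intro μ' σ' ψ' h
        rcases hInv.cDia μ' σ' ψ' h with h | h
        · exact Or.inl h
        · exact Or.inr (mem_of_mem_cons_of_ne h (by simp))
      · intro μ' σ' ψ' h
        rcases hInv.cEx μ' σ' ψ' h with h | h
        · exact Or.inl h
        · exact Or.inr (mem_of_mem_cons_of_ne h (by simp))
      · intro μ' ν' σ' i' ψ' χ' h hocc
        rcases hInv.cBox μ' ν' σ' i' ψ' χ' h hocc with h | h
        · exact Or.inl h
        · exact Or.inr (mem_of_mem_cons_of_ne h (by simp))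
    | neg p =>
      refine IH (msr φ P') (msr_lt (A := []) hszx (by simp)) P' b n 𝔐 U rfl ?_
      refine ⟨hInv.branch, fun y hy => hInv.psub y (List.mem_cons_of_mem _ hy),
        hInv.szb, hInv.mdb, hInv.bound, hInv.uBound, hInv.inU, hInv.uNe, hInv.uPre,
        hInv.sat, hInv.refc, hInv.vert, ?_, ?_, hInv.cLit, ?_, ?_, ?_⟩
      · intro μ' σ' ψ₁ ψ₂ h
        rcases hInv.cAnd μ' σ' ψ₁ ψ₂ h with h | h
        · exact Or.inl h
        · exact Or.inr (mem_of_mem_cons_of_ne h (by simp))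
      · intro μ' σ' ψ₁ ψ₂ h
        rcases hInv.cOr μ' σ' ψ₁ ψ₂ h with h | h
        · exact Or.inl h
        · exact Or.inr (mem_of_mem_cons_of_ne h (by simp))
      · intro μ' σ' ψ' h
        rcases hInv.cDia μ' σ' ψ' h with h | h
        · exact Or.inl h
        · exact Or.inr (mem_of_mem_cons_of_ne h (by simp))
      · intro μ' σ' ψ' h
        rcases hInv.cEx μ' σ' ψ' h with h | h
        · exact Or.inl h
        · exact Or.inr (mem_of_mem_cons_of_ne h (by simp))
      · intro μ' ν' σ' i' ψ' χ' h hocc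
        rcases hInv.cBox μ' ν' σ' i' ψ' χ' h hocc with h | h
        · exact Or.inl h
        · exact Or.inr (mem_of_mem_cons_of_ne h (by simp))
    | and ψ₁ ψ₂ =>
      have hs1 : (𝔐 μ σ).sat ψ₁ := hsat.1
      have hs2 : (𝔐 μ σ).sat ψ₂ := hsat.2
      have hrefF : ∀ π, π ≠ [] → π <+: μ → Refines (𝔐 μ σ) (𝔐 π σ) :=
        fun π hne hpre => hInv.refc π μ σ (hInv.uPre π μ σ hUx hne hpre) hUx hpre
      set B : List PrefixedFormula := addb μ σ ψ₁ ++ addb μ σ ψ₂ with hB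
      set A : List PrefixedFormula := addp μ σ ψ₁ ++ addp μ σ ψ₂ with hA
      have hBprop : ∀ y ∈ B, y.2.1 = σ ∧ y.1 ≠ [] ∧ y.1 <+: μ ∧ (y.2.2 = ψ₁ ∨ y.2.2 = ψ₂) := by
        intro y hy
        rcases List.mem_append.mp hy with hy | hy
        · obtain ⟨h1, h2, h3, h4⟩ := mem_addb' hμ hy
          exact ⟨h1, h3, h4, Or.inl h2⟩
        · obtain ⟨h1, h2, h3, h4⟩ := mem_addb' hμ hy
          exact ⟨h1, h3, h4, Or.inr h2⟩
      have hBnonlit : ∀ y ∈ B, ¬ IsLiteral y.2.2 → y ∈ A := by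
        intro y hy hnl
        rw [hA]
        rcases List.mem_append.mp hy with hy | hy
        · have h2 := (mem_addb' hμ hy).2.1
          rw [h2] at hnl
          rw [addb_nonlit hnl] at hy
          simp only [List.mem_singleton] at hy
          subst hy
          exact List.mem_append_left _ (by rw [addp_nonlit hnl]; simp)
        · have h2 := (mem_addb' hμ hy).2.1
          rw [h2] at hnl
          rw [addb_nonlit hnl] at hy
          simp only [List.mem_singleton] at hy
          subst hy
          exact List.mem_append_right _ (by rw [addp_nonlit hnl]; simp)
      have hsatB : ∀ y ∈ B ++ b, (𝔐 y.1 y.2.1).sat y.2.2 := by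
        intro y hy
        rcases List.mem_append.mp hy with hy | hy
        · rcases List.mem_append.mp hy with hy | hy
          · have h := sat_addb_gen (F := fun a => 𝔐 a σ) hμ hrefF hs1 y hy
            rw [(mem_addb' hμ hy).1]; exact h
          · have h := sat_addb_gen (F := fun a => 𝔐 a σ) hμ hrefF hs2 y hy
            rw [(mem_addb' hμ hy).1]; exact h
        · exact hInv.sat y hy
      have h1 := Branch.andRule hInv.branch hxb
      have h2 := branch_addb h1 hμ
      rw [Set.union_insert] at h2
      have h3 := branch_addb h2 hμ
      have hbeq : {x | x ∈ addb μ σ ψ₂} ∪ ({x | x ∈ addb μ σ ψ₁} ∪ {x | x ∈ b})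
          = {x | x ∈ B ++ b} := by
        ext z
        simp only [hB, Set.mem_union, Set.mem_setOf_eq, List.mem_append]
        tauto
      rw [hbeq] at h3
      have hszand : sz ψ₁ + sz ψ₂ + 1 ≤ sz φ := hszx
      refine IH (msr φ (A ++ P')) (msr_lt hszx ?_) (A ++ P') (B ++ b) n 𝔐 U rfl ?_
      · intro a ha
        rcases List.mem_append.mp ha with ha | ha
        · obtain ⟨rfl, -⟩ := mem_addp ha
          exact rank_lt_same (by show sz ψ₁ < sz ψ₁ + sz ψ₂ + 1; have := one_le_sz ψ₂; omega)
        · obtain ⟨rfl, -⟩ := mem_addp ha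
          exact rank_lt_same (by show sz ψ₂ < sz ψ₁ + sz ψ₂ + 1; have := one_le_sz ψ₁; omega)
      refine ⟨h3, ?_, ?_, ?_, ?_, hInv.uBound, ?_, hInv.uNe, hInv.uPre, hsatB,
        hInv.refc, hInv.vert, ?_, ?_, ?_, ?_, ?_, ?_⟩
      · -- psub
        intro y hy
        rcases List.mem_append.mp hy with hy | hy
        · refine List.mem_append_left _ ?_
          rcases List.mem_append.mp hy with hy | hy
          · exact List.mem_append_left _ (addp_sub_addb hμ hy)
          · exact List.mem_append_right _ (addp_sub_addb hμ hy)
        · exact List.mem_append_right _ (hInv.psub y (List.mem_cons_of_mem _ hy))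
      · -- szb
        intro y hy
        rcases List.mem_append.mp hy with hy | hy
        · rcases (hBprop y hy).2.2.2 with h | h <;> rw [h] <;>
            [have := one_le_sz ψ₂; have := one_le_sz ψ₁] <;> omega
        · exact hInv.szb y hy
      · -- mdb
        intro y hy
        rcases List.mem_append.mp hy with hy | hy
        · obtain ⟨hσ', -, -, hform⟩ := hBprop y hy
          rw [hσ']
          have hmd' : md (RML.and ψ₁ ψ₂) + σ.length ≤ md φ + 1 := hmdx
          rcases hform with h | h <;> rw [h]
          · have h1 : md ψ₁ ≤ md (RML.and ψ₁ ψ₂) := le_max_left _ _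
            omega
          · have h1 : md ψ₂ ≤ md (RML.and ψ₁ ψ₂) := le_max_right _ _
            omega
        · exact hInv.mdb y hy
      · -- bound
        intro y hy
        rcases List.mem_append.mp hy with hy | hy
        · obtain ⟨hσ', -, hpre, -⟩ := hBprop y hy
          obtain ⟨hb1, hb2⟩ := hInv.bound _ hxb
          rw [hσ']
          exact ⟨fun k hk => hb1 k (hpre.subset hk), hb2⟩
        · exact hInv.bound y hy
      · -- inU
        intro y hy
        rcases List.mem_append.mp hy with hy | hy
        · obtain ⟨hσ', hne, hpre, -⟩ := hBprop y hy
          rw [hσ']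
          exact hInv.uPre y.1 μ σ hUx hne hpre
        · exact hInv.inU y hy
      · -- cAnd
        intro μ' σ' χ₁ χ₂ h
        rcases List.mem_append.mp h with h | h
        · exact Or.inr (List.mem_append_left _ (hBnonlit _ h (fun hh => hh)))
        · by_cases heq : ((μ',σ',RML.and χ₁ χ₂) : PrefixedFormula) = (μ,σ,RML.and ψ₁ ψ₂)
          · obtain ⟨rfl, rfl, rfl, rfl⟩ : μ' = μ ∧ σ' = σ ∧ χ₁ = ψ₁ ∧ χ₂ = ψ₂ := by
              simpa [Prod.ext_iff] using heq
            exact Or.inl ⟨List.mem_append_left _ (List.mem_append_left _ (self_mem_addb hμ)),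
              List.mem_append_left _ (List.mem_append_right _ (self_mem_addb hμ))⟩
          · rcases hInv.cAnd μ' σ' χ₁ χ₂ h with hc | hc
            · exact Or.inl ⟨List.mem_append_right _ hc.1, List.mem_append_right _ hc.2⟩
            · exact Or.inr (List.mem_append_right _ (mem_of_mem_cons_of_ne hc heq))
      · -- cOr
        intro μ' σ' χ₁ χ₂ h
        rcases List.mem_append.mp h with h | h
        · exact Or.inr (List.mem_append_left _ (hBnonlit _ h (fun hh => hh)))
        · rcases hInv.cOr μ' σ' χ₁ χ₂ h with hc | hc
          · exact Or.inl (hc.imp (List.mem_append_right B) (List.mem_append_right B))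
          · exact Or.inr (List.mem_append_right _ (mem_of_mem_cons_of_ne hc (by simp)))
      · -- cLit
        intro μ₀ ν σ' l hl hμ₀ hν h
        rcases List.mem_append.mp h with h | h
        · obtain ⟨hσ', hne, hpre, hform⟩ := hBprop _ h
          have hpre₀ : μ₀ <+: μ := (List.prefix_append μ₀ ν).trans hpre
          refine List.mem_append_left _ ?_
          simp only at hσ' hform
          subst hσ'
          rcases hform with hf | hf
          · subst hf
            exact List.mem_append_left _ (mem_addb_of_lit hl hμ₀ hpre₀)
          · subst hf
            exact List.mem_append_right _ (mem_addb_of_lit hl hμ₀ hpre₀)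
        · exact List.mem_append_right _ (hInv.cLit μ₀ ν σ' l hl hμ₀ hν h)
      · -- cDia
        intro μ' σ' χ h
        rcases List.mem_append.mp h with h | h
        · exact Or.inr (List.mem_append_left _ (hBnonlit _ h (fun hh => hh)))
        · rcases hInv.cDia μ' σ' χ h with hc | hc
          · exact Or.inl (hc.imp fun i hi => List.mem_append_right _ hi)
          · exact Or.inr (List.mem_append_right _ (mem_of_mem_cons_of_ne hc (by simp)))
      · -- cEx
        intro μ' σ' χ h
        rcases List.mem_append.mp h with h | h
        · exact Or.inr (List.mem_append_left _ (hBnonlit _ h (fun hh => hh)))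
        · rcases hInv.cEx μ' σ' χ h with hc | hc
          · exact Or.inl (hc.imp fun i hi => List.mem_append_right _ hi)
          · exact Or.inr (List.mem_append_right _ (mem_of_mem_cons_of_ne hc (by simp)))
      · -- cBox
        intro μ₀ ν σ₀ i χb χo hbox hocc
        rcases List.mem_append.mp hbox with hbox | hbox
        · exact Or.inr (List.mem_append_left _ (hBnonlit _ hbox (fun hh => hh)))
        · rcases List.mem_append.mp hocc with hocc | hocc
          · obtain ⟨hσ', hne, hpre, -⟩ := hBprop _ hocc
            simp only at hσ' hpre
            have hpre₀ : μ₀ <+: μ := (List.prefix_append μ₀ ν).trans hpre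
            obtain ⟨ν', hν'⟩ := hpre₀
            have hx' : (μ₀ ++ ν', σ₀ ++ [i], RML.and ψ₁ ψ₂) ∈ b := by
              rw [hν', hσ']; exact hxb
            rcases hInv.cBox μ₀ ν' σ₀ i χb (RML.and ψ₁ ψ₂) hbox hx' with hc | hc
            · exact Or.inl (List.mem_append_right _ hc)
            · exact Or.inr (List.mem_append_right _ (mem_of_mem_cons_of_ne hc (by simp)))
          · rcases hInv.cBox μ₀ ν σ₀ i χb χo hbox hocc with hc | hc
            · exact Or.inl (List.mem_append_right _ hc)
            · exact Or.inr (List.mem_append_right _ (mem_of_mem_cons_of_ne hc (by simp)))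
    | or ψ₁ ψ₂ =>
      have hsat' : Sat (𝔐 μ σ).M (𝔐 μ σ).pt ψ₁ ∨ Sat (𝔐 μ σ).M (𝔐 μ σ).pt ψ₂ := hsat
      rcases hsat' with hs | hs
      · have hrefF : ∀ π, π ≠ [] → π <+: μ → Refines (𝔐 μ σ) (𝔐 π σ) :=
          fun π hne hpre => hInv.refc π μ σ (hInv.uPre π μ σ hUx hne hpre) hUx hpre
        have hBprop : ∀ y ∈ addb μ σ ψ₁, y.2.1 = σ ∧ y.1 ≠ [] ∧ y.1 <+: μ ∧ y.2.2 = ψ₁ := by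
          intro y hy
          obtain ⟨h1, h2, h3, h4⟩ := mem_addb' hμ hy
          exact ⟨h1, h3, h4, h2⟩
        have hBnonlit : ∀ y ∈ addb μ σ ψ₁, ¬ IsLiteral y.2.2 → y ∈ addp μ σ ψ₁ := by
          intro y hy hnl
          have h2 := (hBprop y hy).2.2.2
          rw [h2] at hnl
          rw [addb_nonlit hnl] at hy
          simp only [List.mem_singleton] at hy
          subst hy
          rw [addp_nonlit hnl]; simp
        have hsatB : ∀ y ∈ addb μ σ ψ₁ ++ b, (𝔐 y.1 y.2.1).sat y.2.2 := by
          intro y hy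
          rcases List.mem_append.mp hy with hy | hy
          · have h := sat_addb_gen (F := fun a => 𝔐 a σ) hμ hrefF hs y hy
            rw [(mem_addb' hμ hy).1]; exact h
          · exact hInv.sat y hy
        have h1 := Branch.orLeft hInv.branch hxb
        have h2 := branch_addb h1 hμ
        have hbeq : {x | x ∈ addb μ σ ψ₁} ∪ {x | x ∈ b} = {x | x ∈ addb μ σ ψ₁ ++ b} := by
          ext z
          simp only [Set.mem_union, Set.mem_setOf_eq, List.mem_append]
        rw [hbeq] at h2
        have hszor : sz ψ₁ + sz ψ₂ + 1 ≤ sz φ := hszx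
        refine IH (msr φ (addp μ σ ψ₁ ++ P')) (msr_lt hszx ?_) (addp μ σ ψ₁ ++ P')
          (addb μ σ ψ₁ ++ b) n 𝔐 U rfl ?_
        · intro a ha
          obtain ⟨rfl, -⟩ := mem_addp ha
          refine rank_lt_same ?_
          show sz ψ₁ < sz ψ₁ + sz ψ₂ + 1
          have h1 := one_le_sz ψ₁
          have h2 := one_le_sz ψ₂
          omega
        refine ⟨h2, ?_, ?_, ?_, ?_, hInv.uBound, ?_, hInv.uNe, hInv.uPre, hsatB,
          hInv.refc, hInv.vert, ?_, ?_, ?_, ?_, ?_, ?_⟩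
        · intro y hy
          rcases List.mem_append.mp hy with hy | hy
          · exact List.mem_append_left _ (addp_sub_addb hμ hy)
          · exact List.mem_append_right _ (hInv.psub y (List.mem_cons_of_mem _ hy))
        · intro y hy
          rcases List.mem_append.mp hy with hy | hy
          · rw [(hBprop y hy).2.2.2]
            have := one_le_sz ψ₁; have := one_le_sz ψ₂; omega
          · exact hInv.szb y hy
        · intro y hy
          rcases List.mem_append.mp hy with hy | hy
          · obtain ⟨hσ', -, -, hform⟩ := hBprop y hy
            rw [hσ', hform]
            have hmd' : md (RML.or ψ₁ ψ₂) + σ.length ≤ md φ + 1 := hmdx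
            have h1 : md ψ₁ ≤ md (RML.or ψ₁ ψ₂) := le_max_left _ _
            omega
          · exact hInv.mdb y hy
        · intro y hy
          rcases List.mem_append.mp hy with hy | hy
          · obtain ⟨hσ', -, hpre, -⟩ := hBprop y hy
            obtain ⟨hb1, hb2⟩ := hInv.bound _ hxb
            rw [hσ']
            exact ⟨fun k hk => hb1 k (hpre.subset hk), hb2⟩
          · exact hInv.bound y hy
        · intro y hy
          rcases List.mem_append.mp hy with hy | hy
          · obtain ⟨hσ', hne, hpre, -⟩ := hBprop y hy
            rw [hσ']
            exact hInv.uPre y.1 μ σ hUx hne hpre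
          · exact hInv.inU y hy
        · intro μ' σ' χ₁ χ₂ h
          rcases List.mem_append.mp h with h | h
          · exact Or.inr (List.mem_append_left _ (hBnonlit _ h (fun hh => hh)))
          · rcases hInv.cAnd μ' σ' χ₁ χ₂ h with hc | hc
            · exact Or.inl ⟨List.mem_append_right _ hc.1, List.mem_append_right _ hc.2⟩
            · exact Or.inr (List.mem_append_right _ (mem_of_mem_cons_of_ne hc (by simp)))
        · intro μ' σ' χ₁ χ₂ h
          rcases List.mem_append.mp h with h | h
          · exact Or.inr (List.mem_append_left _ (hBnonlit _ h (fun hh => hh)))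
          · by_cases heq : ((μ',σ',RML.or χ₁ χ₂) : PrefixedFormula) = (μ,σ,RML.or ψ₁ ψ₂)
            · obtain ⟨rfl, rfl, rfl, rfl⟩ : μ' = μ ∧ σ' = σ ∧ χ₁ = ψ₁ ∧ χ₂ = ψ₂ := by
                simpa [Prod.ext_iff] using heq
              exact Or.inl (Or.inl (List.mem_append_left _ (self_mem_addb hμ)))
            · rcases hInv.cOr μ' σ' χ₁ χ₂ h with hc | hc
              · exact Or.inl (hc.imp (List.mem_append_right _) (List.mem_append_right _))
              · exact Or.inr (List.mem_append_right _ (mem_of_mem_cons_of_ne hc heq))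
        · intro μ₀ ν σ' l hl hμ₀ hν h
          rcases List.mem_append.mp h with h | h
          · obtain ⟨hσ', hne, hpre, hform⟩ := hBprop _ h
            have hpre₀ : μ₀ <+: μ := (List.prefix_append μ₀ ν).trans hpre
            refine List.mem_append_left _ ?_
            simp only at hσ' hform
            subst hσ'
            subst hform
            exact mem_addb_of_lit hl hμ₀ hpre₀
          · exact List.mem_append_right _ (hInv.cLit μ₀ ν σ' l hl hμ₀ hν h)
        · intro μ' σ' χ h
          rcases List.mem_append.mp h with h | h
          · exact Or.inr (List.mem_append_left _ (hBnonlit _ h (fun hh => hh)))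
          · rcases hInv.cDia μ' σ' χ h with hc | hc
            · exact Or.inl (hc.imp fun i hi => List.mem_append_right _ hi)
            · exact Or.inr (List.mem_append_right _ (mem_of_mem_cons_of_ne hc (by simp)))
        · intro μ' σ' χ h
          rcases List.mem_append.mp h with h | h
          · exact Or.inr (List.mem_append_left _ (hBnonlit _ h (fun hh => hh)))
          · rcases hInv.cEx μ' σ' χ h with hc | hc
            · exact Or.inl (hc.imp fun i hi => List.mem_append_right _ hi)
            · exact Or.inr (List.mem_append_right _ (mem_of_mem_cons_of_ne hc (by simp)))
        · intro μ₀ ν σ₀ i χb χo hbox hocc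
          rcases List.mem_append.mp hbox with hbox | hbox
          · exact Or.inr (List.mem_append_left _ (hBnonlit _ hbox (fun hh => hh)))
          · rcases List.mem_append.mp hocc with hocc | hocc
            · obtain ⟨hσ', hne, hpre, -⟩ := hBprop _ hocc
              simp only at hσ' hpre
              have hpre₀ : μ₀ <+: μ := (List.prefix_append μ₀ ν).trans hpre
              obtain ⟨ν', hν'⟩ := hpre₀
              have hx' : (μ₀ ++ ν', σ₀ ++ [i], RML.or ψ₁ ψ₂) ∈ b := by
                rw [hν', hσ']; exact hxb
              rcases hInv.cBox μ₀ ν' σ₀ i χb (RML.or ψ₁ ψ₂) hbox hx' with hc | hc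
              · exact Or.inl (List.mem_append_right _ hc)
              · exact Or.inr (List.mem_append_right _ (mem_of_mem_cons_of_ne hc (by simp)))
            · rcases hInv.cBox μ₀ ν σ₀ i χb χo hbox hocc with hc | hc
              · exact Or.inl (List.mem_append_right _ hc)
              · exact Or.inr (List.mem_append_right _ (mem_of_mem_cons_of_ne hc (by simp)))
      · have hrefF : ∀ π, π ≠ [] → π <+: μ → Refines (𝔐 μ σ) (𝔐 π σ) :=
          fun π hne hpre => hInv.refc π μ σ (hInv.uPre π μ σ hUx hne hpre) hUx hpre
        have hBprop : ∀ y ∈ addb μ σ ψ₂, y.2.1 = σ ∧ y.1 ≠ [] ∧ y.1 <+: μ ∧ y.2.2 = ψ₂ := by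
          intro y hy
          obtain ⟨h1, h2, h3, h4⟩ := mem_addb' hμ hy
          exact ⟨h1, h3, h4, h2⟩
        have hBnonlit : ∀ y ∈ addb μ σ ψ₂, ¬ IsLiteral y.2.2 → y ∈ addp μ σ ψ₂ := by
          intro y hy hnl
          have h2 := (hBprop y hy).2.2.2
          rw [h2] at hnl
          rw [addb_nonlit hnl] at hy
          simp only [List.mem_singleton] at hy
          subst hy
          rw [addp_nonlit hnl]; simp
        have hsatB : ∀ y ∈ addb μ σ ψ₂ ++ b, (𝔐 y.1 y.2.1).sat y.2.2 := by
          intro y hy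
          rcases List.mem_append.mp hy with hy | hy
          · have h := sat_addb_gen (F := fun a => 𝔐 a σ) hμ hrefF hs y hy
            rw [(mem_addb' hμ hy).1]; exact h
          · exact hInv.sat y hy
        have h1 := Branch.orRight hInv.branch hxb
        have h2 := branch_addb h1 hμ
        have hbeq : {x | x ∈ addb μ σ ψ₂} ∪ {x | x ∈ b} = {x | x ∈ addb μ σ ψ₂ ++ b} := by
          ext z
          simp only [Set.mem_union, Set.mem_setOf_eq, List.mem_append]
        rw [hbeq] at h2
        have hszor : sz ψ₁ + sz ψ₂ + 1 ≤ sz φ := hszx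
        refine IH (msr φ (addp μ σ ψ₂ ++ P')) (msr_lt hszx ?_) (addp μ σ ψ₂ ++ P')
          (addb μ σ ψ₂ ++ b) n 𝔐 U rfl ?_
        · intro a ha
          obtain ⟨rfl, -⟩ := mem_addp ha
          refine rank_lt_same ?_
          show sz ψ₂ < sz ψ₁ + sz ψ₂ + 1
          have h1 := one_le_sz ψ₁
          have h2 := one_le_sz ψ₂
          omega
        refine ⟨h2, ?_, ?_, ?_, ?_, hInv.uBound, ?_, hInv.uNe, hInv.uPre, hsatB,
          hInv.refc, hInv.vert, ?_, ?_, ?_, ?_, ?_, ?_⟩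
        · intro y hy
          rcases List.mem_append.mp hy with hy | hy
          · exact List.mem_append_left _ (addp_sub_addb hμ hy)
          · exact List.mem_append_right _ (hInv.psub y (List.mem_cons_of_mem _ hy))
        · intro y hy
          rcases List.mem_append.mp hy with hy | hy
          · rw [(hBprop y hy).2.2.2]
            have := one_le_sz ψ₁; have := one_le_sz ψ₂; omega
          · exact hInv.szb y hy
        · intro y hy
          rcases List.mem_append.mp hy with hy | hy
          · obtain ⟨hσ', -, -, hform⟩ := hBprop y hy
            rw [hσ', hform]
            have hmd' : md (RML.or ψ₁ ψ₂) + σ.length ≤ md φ + 1 := hmdx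
            have h1 : md ψ₂ ≤ md (RML.or ψ₁ ψ₂) := le_max_right _ _
            omega
          · exact hInv.mdb y hy
        · intro y hy
          rcases List.mem_append.mp hy with hy | hy
          · obtain ⟨hσ', -, hpre, -⟩ := hBprop y hy
            obtain ⟨hb1, hb2⟩ := hInv.bound _ hxb
            rw [hσ']
            exact ⟨fun k hk => hb1 k (hpre.subset hk), hb2⟩
          · exact hInv.bound y hy
        · intro y hy
          rcases List.mem_append.mp hy with hy | hy
          · obtain ⟨hσ', hne, hpre, -⟩ := hBprop y hy
            rw [hσ']
            exact hInv.uPre y.1 μ σ hUx hne hpre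
          · exact hInv.inU y hy
        · intro μ' σ' χ₁ χ₂ h
          rcases List.mem_append.mp h with h | h
          · exact Or.inr (List.mem_append_left _ (hBnonlit _ h (fun hh => hh)))
          · rcases hInv.cAnd μ' σ' χ₁ χ₂ h with hc | hc
            · exact Or.inl ⟨List.mem_append_right _ hc.1, List.mem_append_right _ hc.2⟩
            · exact Or.inr (List.mem_append_right _ (mem_of_mem_cons_of_ne hc (by simp)))
        · intro μ' σ' χ₁ χ₂ h
          rcases List.mem_append.mp h with h | h
          · exact Or.inr (List.mem_append_left _ (hBnonlit _ h (fun hh => hh)))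
          · by_cases heq : ((μ',σ',RML.or χ₁ χ₂) : PrefixedFormula) = (μ,σ,RML.or ψ₁ ψ₂)
            · obtain ⟨rfl, rfl, rfl, rfl⟩ : μ' = μ ∧ σ' = σ ∧ χ₁ = ψ₁ ∧ χ₂ = ψ₂ := by
                simpa [Prod.ext_iff] using heq
              exact Or.inl (Or.inr (List.mem_append_left _ (self_mem_addb hμ)))
            · rcases hInv.cOr μ' σ' χ₁ χ₂ h with hc | hc
              · exact Or.inl (hc.imp (List.mem_append_right _) (List.mem_append_right _))
              · exact Or.inr (List.mem_append_right _ (mem_of_mem_cons_of_ne hc heq))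
        · intro μ₀ ν σ' l hl hμ₀ hν h
          rcases List.mem_append.mp h with h | h
          · obtain ⟨hσ', hne, hpre, hform⟩ := hBprop _ h
            have hpre₀ : μ₀ <+: μ := (List.prefix_append μ₀ ν).trans hpre
            refine List.mem_append_left _ ?_
            simp only at hσ' hform
            subst hσ'
            subst hform
            exact mem_addb_of_lit hl hμ₀ hpre₀
          · exact List.mem_append_right _ (hInv.cLit μ₀ ν σ' l hl hμ₀ hν h)
        · intro μ' σ' χ h
          rcases List.mem_append.mp h with h | h
          · exact Or.inr (List.mem_append_left _ (hBnonlit _ h (fun hh => hh)))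
          · rcases hInv.cDia μ' σ' χ h with hc | hc
            · exact Or.inl (hc.imp fun i hi => List.mem_append_right _ hi)
            · exact Or.inr (List.mem_append_right _ (mem_of_mem_cons_of_ne hc (by simp)))
        · intro μ' σ' χ h
          rcases List.mem_append.mp h with h | h
          · exact Or.inr (List.mem_append_left _ (hBnonlit _ h (fun hh => hh)))
          · rcases hInv.cEx μ' σ' χ h with hc | hc
            · exact Or.inl (hc.imp fun i hi => List.mem_append_right _ hi)
            · exact Or.inr (List.mem_append_right _ (mem_of_mem_cons_of_ne hc (by simp)))
        · intro μ₀ ν σ₀ i χb χo hbox hocc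
          rcases List.mem_append.mp hbox with hbox | hbox
          · exact Or.inr (List.mem_append_left _ (hBnonlit _ hbox (fun hh => hh)))
          · rcases List.mem_append.mp hocc with hocc | hocc
            · obtain ⟨hσ', hne, hpre, -⟩ := hBprop _ hocc
              simp only at hσ' hpre
              have hpre₀ : μ₀ <+: μ := (List.prefix_append μ₀ ν).trans hpre
              obtain ⟨ν', hν'⟩ := hpre₀
              have hx' : (μ₀ ++ ν', σ₀ ++ [i], RML.or ψ₁ ψ₂) ∈ b := by
                rw [hν', hσ']; exact hxb
              rcases hInv.cBox μ₀ ν' σ₀ i χb (RML.or ψ₁ ψ₂) hbox hx' with hc | hc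
              · exact Or.inl (List.mem_append_right _ hc)
              · exact Or.inr (List.mem_append_right _ (mem_of_mem_cons_of_ne hc (by simp)))
            · rcases hInv.cBox μ₀ ν σ₀ i χb χo hbox hocc with hc | hc
              · exact Or.inl (List.mem_append_right _ hc)
              · exact Or.inr (List.mem_append_right _ (mem_of_mem_cons_of_ne hc (by simp)))
    | dia ψ =>
      classical
      obtain ⟨t, htR, hts⟩ : ∃ t, (𝔐 μ σ).M.R (𝔐 μ σ).pt t ∧ Sat (𝔐 μ σ).M t ψ := hsat
      have hg : ∀ π π', π ≠ [] → π <+: π' → π' <+: μ → Refines (𝔐 π' σ) (𝔐 π σ) := by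
        intro π π' hne hp hp'
        have hπ'ne : π' ≠ [] := ne_nil_of_prefix hne hp
        exact hInv.refc π π' σ (hInv.uPre π μ σ hUx hne (hp.trans hp'))
          (hInv.uPre π' μ σ hUx hπ'ne hp') hp
      obtain ⟨f, hfμ, hstep, hfref⟩ := chain (fun π => 𝔐 π σ) μ hμ hg t htR
      set 𝔐' : List ℕ → List ℕ → PM :=
        fun a c => if c = σ ++ [n] ∧ a <+: μ then f a else 𝔐 a c with h𝔐'
      set U' : List ℕ → List ℕ → Prop :=
        fun a c => U a c ∨ (c = σ ++ [n] ∧ a ≠ [] ∧ a <+: μ) with hU'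
      have hUn2 : ∀ a c, U a c → n ∈ c → False := by
        intro a c hUa hn
        have := (hInv.uBound a c hUa).2 n hn
        omega
      have hnotτ : ∀ a c, U a c → c ≠ σ ++ [n] := by
        intro a c hUa hcontra
        exact hUn2 a c hUa (by rw [hcontra]; simp)
      have h𝔐old : ∀ a c, U a c → 𝔐' a c = 𝔐 a c := by
        intro a c hUa
        rw [h𝔐']
        simp only
        rw [if_neg]
        rintro ⟨h1, -⟩
        exact hnotτ a c hUa h1
      have h𝔐b : ∀ z ∈ b, 𝔐' z.1 z.2.1 = 𝔐 z.1 z.2.1 :=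
        fun z hz => h𝔐old _ _ (hInv.inU z hz)
      have h𝔐new : ∀ a, a <+: μ → 𝔐' a (σ ++ [n]) = f a := by
        intro a hp
        rw [h𝔐']
        simp [hp]
      have hfsat : (f μ).sat ψ := by
        rw [hfμ]; exact hts
      have hLfact : ∀ z ∈ boxList b μ σ,
          (z.1, σ, RML.box z.2) ∈ b ∧ z.1 ≠ [] ∧ z.1 <+: μ := by
        intro z hz
        obtain ⟨h1, h2⟩ := mem_boxList.mp hz
        exact ⟨h1, hInv.uNe z.1 σ (hInv.inU _ h1), h2⟩
      have hfsatz : ∀ z ∈ boxList b μ σ, (f z.1).sat z.2 := by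
        intro z hz
        obtain ⟨h1, h2, h3⟩ := hLfact z hz
        exact (hstep z.1 h2 h3).sat_box (hInv.sat _ h1)
      set Bf : List PrefixedFormula :=
        addb μ (σ ++ [n]) ψ ++ ((boxList b μ σ).map fun z => addb z.1 (σ ++ [n]) z.2).flatten
        with hBf
      set Af : List PrefixedFormula :=
        addp μ (σ ++ [n]) ψ ++ ((boxList b μ σ).map fun z => addp z.1 (σ ++ [n]) z.2).flatten
        with hAf
      have hBprop : ∀ y ∈ Bf, y.2.1 = σ ++ [n] ∧ y.1 ≠ [] ∧
          ((y.2.2 = ψ ∧ y.1 <+: μ ∧ y ∈ addb μ (σ ++ [n]) ψ) ∨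
           (∃ z ∈ boxList b μ σ, y.2.2 = z.2 ∧ y.1 <+: z.1 ∧ y ∈ addb z.1 (σ ++ [n]) z.2)) := by
        intro y hy
        rcases List.mem_append.mp hy with hy | hy
        · obtain ⟨h1, h2, h3, h4⟩ := mem_addb' hμ hy
          exact ⟨h1, h3, Or.inl ⟨h2, h4, hy⟩⟩
        · rw [List.mem_flatten] at hy
          obtain ⟨l, hl, hyl⟩ := hy
          rw [List.mem_map] at hl
          obtain ⟨z, hz, rfl⟩ := hl
          obtain ⟨h1, h2, h3, h4⟩ := mem_addb' (hLfact z hz).2.1 hyl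
          exact ⟨h1, h3, Or.inr ⟨z, hz, h2, h4, hyl⟩⟩
      have hresBf : ∀ z ∈ boxList b μ σ, ∀ y ∈ addb z.1 (σ ++ [n]) z.2, y ∈ Bf := by
        intro z hz y hy
        refine List.mem_append_right _ ?_
        rw [List.mem_flatten]
        exact ⟨addb z.1 (σ ++ [n]) z.2, List.mem_map_of_mem hz, hy⟩
      have hBnonlit : ∀ y ∈ Bf, ¬ IsLiteral y.2.2 → y ∈ Af := by
        intro y hy hnl
        obtain ⟨-, -, hc⟩ := hBprop y hy
        rcases hc with ⟨hform, -, hyadd⟩ | ⟨z, hz, hform, -, hyadd⟩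
        · rw [hform] at hnl
          rw [addb_nonlit hnl] at hyadd
          simp only [List.mem_singleton] at hyadd
          subst hyadd
          exact List.mem_append_left _ (by rw [addp_nonlit hnl]; simp)
        · rw [hform] at hnl
          rw [addb_nonlit hnl] at hyadd
          simp only [List.mem_singleton] at hyadd
          subst hyadd
          refine List.mem_append_right _ ?_
          rw [List.mem_flatten]
          exact ⟨addp z.1 (σ ++ [n]) z.2, List.mem_map_of_mem hz,
            by rw [addp_nonlit hnl]; simp⟩
      have hAfBf : ∀ y ∈ Af, y ∈ Bf := by
        intro y hy
        rcases List.mem_append.mp hy with hy | hy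
        · exact List.mem_append_left _ (addp_sub_addb hμ hy)
        · rw [List.mem_flatten] at hy
          obtain ⟨l, hl, hyl⟩ := hy
          rw [List.mem_map] at hl
          obtain ⟨z, hz, rfl⟩ := hl
          exact hresBf z hz y (addp_sub_addb (hLfact z hz).2.1 hyl)
      have hsatB : ∀ y ∈ Bf ++ b, (𝔐' y.1 y.2.1).sat y.2.2 := by
        intro y hy
        rcases List.mem_append.mp hy with hy | hy
        · obtain ⟨hσ', -, hc⟩ := hBprop y hy
          rcases hc with ⟨-, -, hyadd⟩ | ⟨z, hz, -, -, hyadd⟩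
          · have hrefF : ∀ π, π ≠ [] → π <+: μ →
                Refines (𝔐' μ (σ ++ [n])) (𝔐' π (σ ++ [n])) := by
              intro π hne hpre
              rw [h𝔐new μ (List.prefix_refl μ), h𝔐new π hpre]
              exact hfref π μ hne hpre (List.prefix_refl μ)
            have hsF : (𝔐' μ (σ ++ [n])).sat ψ := by
              rw [h𝔐new μ (List.prefix_refl μ)]; exact hfsat
            have h := sat_addb_gen (F := fun a => 𝔐' a (σ ++ [n])) hμ hrefF hsF y hyadd
            rw [hσ']; exact h
          · obtain ⟨hzb, hzne, hzpre⟩ := hLfact z hz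
            have hrefF : ∀ π, π ≠ [] → π <+: z.1 →
                Refines (𝔐' z.1 (σ ++ [n])) (𝔐' π (σ ++ [n])) := by
              intro π hne hpre
              rw [h𝔐new z.1 hzpre, h𝔐new π (hpre.trans hzpre)]
              exact hfref π z.1 hne hpre hzpre
            have hsF : (𝔐' z.1 (σ ++ [n])).sat z.2 := by
              rw [h𝔐new z.1 hzpre]; exact hfsatz z hz
            have h := sat_addb_gen (F := fun a => 𝔐' a (σ ++ [n])) hzne hrefF hsF y hyadd
            rw [hσ']; exact h
        · rw [h𝔐b y hy]; exact hInv.sat y hy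
      have hfresh : ∀ μ'' χ, ((μ'', σ ++ [n], χ) : PrefixedFormula) ∉ {x | x ∈ b} := by
        intro μ'' χ hc
        have := (hInv.bound _ hc).2 n (by simp)
        omega
      have h1 := Branch.diaRule n hInv.branch hxb hfresh
      have h2 := branch_addb h1 hμ
      have h3 := branch_fold_res (μ := μ) (σ := σ) (i := n) (ψ := ψ) (boxList b μ σ)
        ({x | x ∈ addb μ (σ ++ [n]) ψ} ∪ {x | x ∈ b})
        (Set.mem_union_left _ (self_mem_addb hμ))
        (fun z hz => ⟨Set.mem_union_right _ (hLfact z hz).1, (hLfact z hz).2.1,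
          (hLfact z hz).2.2⟩) h2
      have hbeq : {x | x ∈ ((boxList b μ σ).map fun z => addb z.1 (σ ++ [n]) z.2).flatten}
          ∪ ({x | x ∈ addb μ (σ ++ [n]) ψ} ∪ {x | x ∈ b}) = {x | x ∈ Bf ++ b} := by
        ext z
        simp only [hBf, Set.mem_union, Set.mem_setOf_eq, List.mem_append]
        tauto
      rw [hbeq] at h3
      have hszψ : sz ψ + 1 ≤ sz φ := hszx
      have hmdψ : md ψ + 1 + σ.length ≤ md φ + 1 := hmdx
      refine IH (msr φ (Af ++ P')) (msr_lt hszx ?_) (Af ++ P') (Bf ++ b) (n+1) 𝔐' U' rfl ?_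
      · intro a ha
        rcases List.mem_append.mp ha with ha | ha
        · obtain ⟨rfl, -⟩ := mem_addp ha
          exact rank_lt_deep (by omega) (one_le_sz _) (by omega)
        · rw [List.mem_flatten] at ha
          obtain ⟨l, hl, hal⟩ := ha
          rw [List.mem_map] at hl
          obtain ⟨z, hz, rfl⟩ := hl
          obtain ⟨rfl, -⟩ := mem_addp hal
          have hszz : sz (RML.box z.2) ≤ sz φ := hInv.szb _ (hLfact z hz).1
          have hszz' : sz z.2 + 1 ≤ sz φ := hszz
          exact rank_lt_deep (by omega) (one_le_sz _) (by omega)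
      refine ⟨h3, ?_, ?_, ?_, ?_, ?_, ?_, ?_, ?_, hsatB, ?_, ?_, ?_, ?_, ?_, ?_, ?_, ?_⟩
      · -- psub
        intro z hz
        rcases List.mem_append.mp hz with hz | hz
        · exact List.mem_append_left _ (hAfBf z hz)
        · exact List.mem_append_right _ (hInv.psub z (List.mem_cons_of_mem _ hz))
      · -- szb
        intro y hy
        rcases List.mem_append.mp hy with hy | hy
        · obtain ⟨-, -, hc⟩ := hBprop y hy
          rcases hc with ⟨hform, -, -⟩ | ⟨z, hz, hform, -, -⟩
          · rw [hform]; omega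
          · have hszz : sz (RML.box z.2) ≤ sz φ := hInv.szb _ (hLfact z hz).1
            have hszz' : sz z.2 + 1 ≤ sz φ := hszz
            rw [hform]; omega
        · exact hInv.szb y hy
      · -- mdb
        intro y hy
        rcases List.mem_append.mp hy with hy | hy
        · obtain ⟨hσ', -, hc⟩ := hBprop y hy
          rw [hσ']
          simp only [List.length_append, List.length_singleton]
          rcases hc with ⟨hform, -, -⟩ | ⟨z, hz, hform, -, -⟩
          · rw [hform]; omega
          · have hmdz : md (RML.box z.2) + σ.length ≤ md φ + 1 := hInv.mdb _ (hLfact z hz).1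
            have hmdz' : md z.2 + 1 + σ.length ≤ md φ + 1 := hmdz
            rw [hform]; omega
        · exact hInv.mdb y hy
      · -- bound
        intro y hy
        rcases List.mem_append.mp hy with hy | hy
        · obtain ⟨hσ', -, hc⟩ := hBprop y hy
          obtain ⟨hb1, hb2⟩ := hInv.bound _ hxb
          have hy1 : ∀ k ∈ y.1, k < n + 1 := by
            rcases hc with ⟨-, hpre, -⟩ | ⟨z, hz, -, hpre, -⟩
            · exact fun k hk => Nat.lt_succ_of_lt (hb1 k (hpre.subset hk))
            · have := (hInv.bound _ (hLfact z hz).1).1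
              exact fun k hk => Nat.lt_succ_of_lt (this k (hpre.subset hk))
          refine ⟨hy1, ?_⟩
          rw [hσ']
          intro k hk
          rcases List.mem_append.mp hk with hk | hk
          · exact Nat.lt_succ_of_lt (hb2 k hk)
          · simp at hk; omega
        · obtain ⟨hb1, hb2⟩ := hInv.bound y hy
          exact ⟨fun k hk => Nat.lt_succ_of_lt (hb1 k hk),
            fun k hk => Nat.lt_succ_of_lt (hb2 k hk)⟩
      · -- uBound
        intro a c hUa
        rcases hUa with hUa | ⟨rfl, hane, hapre⟩
        · obtain ⟨hb1, hb2⟩ := hInv.uBound a c hUa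
          exact ⟨fun k hk => Nat.lt_succ_of_lt (hb1 k hk),
            fun k hk => Nat.lt_succ_of_lt (hb2 k hk)⟩
        · obtain ⟨hb1, hb2⟩ := hInv.uBound μ σ hUx
          constructor
          · exact fun k hk => Nat.lt_succ_of_lt (hb1 k (hapre.subset hk))
          · intro k hk
            rcases List.mem_append.mp hk with hk | hk
            · exact Nat.lt_succ_of_lt (hb2 k hk)
            · simp at hk; omega
      · -- inU
        intro y hy
        rcases List.mem_append.mp hy with hy | hy
        · obtain ⟨hσ', hne, hc⟩ := hBprop y hy
          rw [hσ']
          rcases hc with ⟨-, hpre, -⟩ | ⟨z, hz, -, hpre, -⟩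
          · exact Or.inr ⟨rfl, hne, hpre⟩
          · exact Or.inr ⟨rfl, hne, hpre.trans (hLfact z hz).2.2⟩
        · exact Or.inl (hInv.inU y hy)
      · -- uNe
        intro a c hUa
        rcases hUa with hUa | ⟨-, hane, -⟩
        · exact hInv.uNe a c hUa
        · exact hane
      · -- uPre
        intro μ₀ a c hUa h0 hp
        rcases hUa with hUa | ⟨rfl, -, hapre⟩
        · exact Or.inl (hInv.uPre μ₀ a c hUa h0 hp)
        · exact Or.inr ⟨rfl, h0, hp.trans hapre⟩
      · -- refc
        intro a a' c hUa hUa' hp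
        rcases hUa' with hUa' | ⟨rfl, ha'ne, ha'pre⟩
        · rcases hUa with hUa | ⟨rfl, -, -⟩
          · rw [h𝔐old a c hUa, h𝔐old a' c hUa']
            exact hInv.refc a a' c hUa hUa' hp
          · exact absurd rfl (hnotτ a' _ hUa')
        · rcases hUa with hUa | ⟨-, hane, hapre⟩
          · exact absurd rfl (hnotτ a _ hUa)
          · rw [h𝔐new a' ha'pre, h𝔐new a hapre]
            exact hfref a a' hane hp ha'pre
      · -- vert
        intro a c i hU1 hU2
        rcases hU1 with hU1 | ⟨rfl, -, -⟩
        · rcases hU2 with hU2 | ⟨heq, hane, hapre⟩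
          · rw [h𝔐old a c hU1, h𝔐old a (c ++ [i]) hU2]
            exact hInv.vert a c i hU1 hU2
          · obtain ⟨rfl, hin⟩ := List.append_inj' heq (by simp)
            have hi : i = n := by simpa using hin
            subst hi
            rw [h𝔐old a c hU1, h𝔐new a hapre]
            exact hstep a hane hapre
        · rcases hU2 with hU2 | ⟨heq, -, -⟩
          · exact absurd (hUn2 a _ hU2 (by simp)) (fun h => h)
          · exact absurd (congrArg List.length heq) (by simp)
      · -- cAnd
        intro μ'' σ' χ₁ χ₂ h
        rcases List.mem_append.mp h with h | h
        · exact Or.inr (List.mem_append_left _ (hBnonlit _ h (fun hh => hh)))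
        · rcases hInv.cAnd μ'' σ' χ₁ χ₂ h with hc | hc
          · exact Or.inl ⟨List.mem_append_right _ hc.1, List.mem_append_right _ hc.2⟩
          · exact Or.inr (List.mem_append_right _ (mem_of_mem_cons_of_ne hc (by simp)))
      · -- cOr
        intro μ'' σ' χ₁ χ₂ h
        rcases List.mem_append.mp h with h | h
        · exact Or.inr (List.mem_append_left _ (hBnonlit _ h (fun hh => hh)))
        · rcases hInv.cOr μ'' σ' χ₁ χ₂ h with hc | hc
          · exact Or.inl (hc.imp (List.mem_append_right _) (List.mem_append_right _))
          · exact Or.inr (List.mem_append_right _ (mem_of_mem_cons_of_ne hc (by simp)))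
      · -- cLit
        intro μ₀ ν σ' l hl hμ₀ hν h
        rcases List.mem_append.mp h with h | h
        · obtain ⟨hσ', -, hc⟩ := hBprop _ h
          simp only at hσ'
          subst hσ'
          refine List.mem_append_left _ ?_
          rcases hc with ⟨hform, hpre, -⟩ | ⟨z, hz, hform, hpre, -⟩
          · simp only at hform hpre
            subst hform
            have hpre₀ : μ₀ <+: μ := (List.prefix_append μ₀ ν).trans hpre
            exact List.mem_append_left _ (mem_addb_of_lit hl hμ₀ hpre₀)
          · simp only at hform hpre
            subst hform
            have hpre₀ : μ₀ <+: z.1 := (List.prefix_append μ₀ ν).trans hpre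
            exact hresBf z hz _ (mem_addb_of_lit hl hμ₀ hpre₀)
        · exact List.mem_append_right _ (hInv.cLit μ₀ ν σ' l hl hμ₀ hν h)
      · -- cDia
        intro μ'' σ' χ h
        rcases List.mem_append.mp h with h | h
        · exact Or.inr (List.mem_append_left _ (hBnonlit _ h (fun hh => hh)))
        · by_cases heq : ((μ'',σ',RML.dia χ) : PrefixedFormula) = (μ,σ,RML.dia ψ)
          · obtain ⟨h1, h2, h3⟩ : μ'' = μ ∧ σ' = σ ∧ χ = ψ := by
              simpa [Prod.ext_iff] using heq
            refine Or.inl ⟨n, List.mem_append_left _ (List.mem_append_left _ ?_)⟩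
            rw [h1, h2, h3]
            exact self_mem_addb hμ
          · rcases hInv.cDia μ'' σ' χ h with hc | hc
            · exact Or.inl (hc.imp fun i hi => List.mem_append_right _ hi)
            · exact Or.inr (List.mem_append_right _ (mem_of_mem_cons_of_ne hc heq))
      · -- cEx
        intro μ'' σ' χ h
        rcases List.mem_append.mp h with h | h
        · exact Or.inr (List.mem_append_left _ (hBnonlit _ h (fun hh => hh)))
        · rcases hInv.cEx μ'' σ' χ h with hc | hc
          · exact Or.inl (hc.imp fun i hi => List.mem_append_right _ hi)
          · exact Or.inr (List.mem_append_right _ (mem_of_mem_cons_of_ne hc (by simp)))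
      · -- cBox
        intro μ₀ ν σ₀ i χb χo hbox hocc
        rcases List.mem_append.mp hbox with hbox1 | hbox2
        · exact Or.inr (List.mem_append_left _ (hBnonlit _ hbox1 (fun hh => hh)))
        · rcases List.mem_append.mp hocc with hocc1 | hocc2
          · -- occurrence among the new formulas : at state prefix σ ++ [n]
            obtain ⟨hσ', -, hc⟩ := hBprop _ hocc1
            simp only at hσ'
            have hσ₀ : σ₀ = σ := (List.append_inj' hσ' (by simp)).1
            have hpre₀ : μ₀ <+: μ := by
              rcases hc with ⟨-, hpre, -⟩ | ⟨z, hz, -, hpre, -⟩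
              · exact ((List.prefix_append μ₀ ν).trans hpre)
              · exact ((List.prefix_append μ₀ ν).trans hpre).trans (hLfact z hz).2.2
            have hzbx : ((μ₀, χb) : List ℕ × RML) ∈ boxList b μ σ :=
              mem_boxList.mpr ⟨by rw [← hσ₀]; exact hbox2, hpre₀⟩
            have hμ₀ne : μ₀ ≠ [] := hInv.uNe μ₀ σ₀ (hInv.inU (μ₀, σ₀, RML.box χb) hbox2)
            refine Or.inl (List.mem_append_left _ ?_)
            rw [hσ']
            exact hresBf _ hzbx _ (self_mem_addb hμ₀ne)
          · rcases hInv.cBox μ₀ ν σ₀ i χb χo hbox2 hocc2 with hc | hc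
            · exact Or.inl (List.mem_append_right _ hc)
            · exact Or.inr (List.mem_append_right _ (mem_of_mem_cons_of_ne hc (by simp)))
    | box ψ =>
      classical
      have hLfact : ∀ z ∈ chList b μ σ, z ∈ b ∧ μ <+: z.1 ∧ isChild σ z.2.1 :=
        fun z hz => mem_chList.mp hz
      have hUz : ∀ z ∈ chList b μ σ, U μ z.2.1 := by
        intro z hz
        obtain ⟨hzb, hzpre, -⟩ := hLfact z hz
        exact hInv.uPre μ z.1 z.2.1 (hInv.inU z hzb) hμ hzpre
      have hsatz : ∀ z ∈ chList b μ σ, (𝔐 μ z.2.1).sat ψ := by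
        intro z hz
        obtain ⟨hzb, hzpre, hch⟩ := hLfact z hz
        obtain ⟨i, hi⟩ := isChild_iff.mp hch
        have hstep : StepPM (𝔐 μ σ) (𝔐 μ z.2.1) := by
          rw [hi]
          exact hInv.vert μ σ i hUx (by rw [← hi]; exact hUz z hz)
        exact hstep.sat_box hsat
      set Bf : List PrefixedFormula :=
        ((chList b μ σ).map fun z => addb μ z.2.1 ψ).flatten with hBf
      set Af : List PrefixedFormula :=
        ((chList b μ σ).map fun z => addp μ z.2.1 ψ).flatten with hAf
      have hmemBf : ∀ z ∈ chList b μ σ, ∀ y ∈ addb μ z.2.1 ψ, y ∈ Bf := by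
        intro z hz y hy
        rw [hBf, List.mem_flatten]
        exact ⟨addb μ z.2.1 ψ, List.mem_map_of_mem hz, hy⟩
      have hBprop : ∀ y ∈ Bf, ∃ z ∈ chList b μ σ,
          y.2.1 = z.2.1 ∧ y.2.2 = ψ ∧ y.1 ≠ [] ∧ y.1 <+: μ ∧ y ∈ addb μ z.2.1 ψ := by
        intro y hy
        rw [hBf, List.mem_flatten] at hy
        obtain ⟨l, hl, hyl⟩ := hy
        rw [List.mem_map] at hl
        obtain ⟨z, hz, rfl⟩ := hl
        obtain ⟨h1, h2, h3, h4⟩ := mem_addb' hμ hyl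
        exact ⟨z, hz, h1, h2, h3, h4, hyl⟩
      have hAfBf : ∀ y ∈ Af, y ∈ Bf := by
        intro y hy
        rw [hAf, List.mem_flatten] at hy
        obtain ⟨l, hl, hyl⟩ := hy
        rw [List.mem_map] at hl
        obtain ⟨z, hz, rfl⟩ := hl
        exact hmemBf z hz y (addp_sub_addb hμ hyl)
      have hBnonlit : ∀ y ∈ Bf, ¬ IsLiteral y.2.2 → y ∈ Af := by
        intro y hy hnl
        obtain ⟨z, hz, hσ', hform, -, -, hyadd⟩ := hBprop y hy
        rw [hform] at hnl
        rw [addb_nonlit hnl] at hyadd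
        simp only [List.mem_singleton] at hyadd
        subst hyadd
        rw [hAf, List.mem_flatten]
        exact ⟨addp μ z.2.1 ψ, List.mem_map_of_mem hz, by rw [addp_nonlit hnl]; simp⟩
      have hsatB : ∀ y ∈ Bf ++ b, (𝔐 y.1 y.2.1).sat y.2.2 := by
        intro y hy
        rcases List.mem_append.mp hy with hy | hy
        · obtain ⟨z, hz, hσ', hform, -, -, hyadd⟩ := hBprop y hy
          have hrefF : ∀ π, π ≠ [] → π <+: μ → Refines (𝔐 μ z.2.1) (𝔐 π z.2.1) :=
            fun π hne hpre =>
              hInv.refc π μ z.2.1 (hInv.uPre π μ z.2.1 (hUz z hz) hne hpre) (hUz z hz) hpre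
          have h := sat_addb_gen (F := fun a => 𝔐 a z.2.1) hμ hrefF (hsatz z hz) y hyadd
          rw [hσ']; exact h
        · exact hInv.sat y hy
      have h2 := branch_fold_box hμ (chList b μ σ) {x | x ∈ b} hxb hLfact hInv.branch
      have hbeq : {x | x ∈ ((chList b μ σ).map fun z => addb μ z.2.1 ψ).flatten} ∪ {x | x ∈ b}
          = {x | x ∈ Bf ++ b} := by
        ext z
        simp only [hBf, Set.mem_union, Set.mem_setOf_eq, List.mem_append]
      rw [hbeq] at h2
      have hszψ : sz ψ + 1 ≤ sz φ := hszx
      have hmdψ : md ψ + 1 + σ.length ≤ md φ + 1 := hmdx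
      refine IH (msr φ (Af ++ P')) (msr_lt hszx ?_) (Af ++ P') (Bf ++ b) n 𝔐 U rfl ?_
      · intro a ha
        rw [hAf, List.mem_flatten] at ha
        obtain ⟨l, hl, hal⟩ := ha
        rw [List.mem_map] at hl
        obtain ⟨z, hz, rfl⟩ := hl
        obtain ⟨rfl, -⟩ := mem_addp hal
        obtain ⟨i, hi⟩ := isChild_iff.mp (hLfact z hz).2.2
        rw [hi]
        exact rank_lt_deep (by omega) (one_le_sz _) (by omega)
      refine ⟨h2, ?_, ?_, ?_, ?_, hInv.uBound, ?_, hInv.uNe, hInv.uPre, hsatB,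
        hInv.refc, hInv.vert, ?_, ?_, ?_, ?_, ?_, ?_⟩
      · -- psub
        intro z hz
        rcases List.mem_append.mp hz with hz | hz
        · exact List.mem_append_left _ (hAfBf z hz)
        · exact List.mem_append_right _ (hInv.psub z (List.mem_cons_of_mem _ hz))
      · -- szb
        intro y hy
        rcases List.mem_append.mp hy with hy | hy
        · obtain ⟨z, hz, -, hform, -, -, -⟩ := hBprop y hy
          rw [hform]; omega
        · exact hInv.szb y hy
      · -- mdb
        intro y hy
        rcases List.mem_append.mp hy with hy | hy
        · obtain ⟨z, hz, hσ', hform, -, -, -⟩ := hBprop y hy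
          obtain ⟨i, hi⟩ := isChild_iff.mp (hLfact z hz).2.2
          rw [hform, hσ', hi]
          simp only [List.length_append, List.length_singleton]
          omega
        · exact hInv.mdb y hy
      · -- bound
        intro y hy
        rcases List.mem_append.mp hy with hy | hy
        · obtain ⟨z, hz, hσ', -, -, hpre, -⟩ := hBprop y hy
          obtain ⟨hb1, hb2⟩ := hInv.bound _ hxb
          obtain ⟨hz1, hz2⟩ := hInv.bound z (hLfact z hz).1
          rw [hσ']
          exact ⟨fun k hk => hb1 k (hpre.subset hk), hz2⟩
        · exact hInv.bound y hy
      · -- inU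
        intro y hy
        rcases List.mem_append.mp hy with hy | hy
        · obtain ⟨z, hz, hσ', -, hne, hpre, -⟩ := hBprop y hy
          rw [hσ']
          exact hInv.uPre y.1 μ z.2.1 (hUz z hz) hne hpre
        · exact hInv.inU y hy
      · -- cAnd
        intro μ'' σ' χ₁ χ₂ h
        rcases List.mem_append.mp h with h | h
        · exact Or.inr (List.mem_append_left _ (hBnonlit _ h (fun hh => hh)))
        · rcases hInv.cAnd μ'' σ' χ₁ χ₂ h with hc | hc
          · exact Or.inl ⟨List.mem_append_right _ hc.1, List.mem_append_right _ hc.2⟩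
          · exact Or.inr (List.mem_append_right _ (mem_of_mem_cons_of_ne hc (by simp)))
      · -- cOr
        intro μ'' σ' χ₁ χ₂ h
        rcases List.mem_append.mp h with h | h
        · exact Or.inr (List.mem_append_left _ (hBnonlit _ h (fun hh => hh)))
        · rcases hInv.cOr μ'' σ' χ₁ χ₂ h with hc | hc
          · exact Or.inl (hc.imp (List.mem_append_right _) (List.mem_append_right _))
          · exact Or.inr (List.mem_append_right _ (mem_of_mem_cons_of_ne hc (by simp)))
      · -- cLit
        intro μ₀ ν σ' l hl hμ₀ hν h
        rcases List.mem_append.mp h with h | h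
        · obtain ⟨z, hz, hσ', hform, hne, hpre, -⟩ := hBprop _ h
          have hpre₀ : μ₀ <+: μ := (List.prefix_append μ₀ ν).trans hpre
          refine List.mem_append_left _ ?_
          simp only at hσ' hform
          subst hσ'
          subst hform
          exact hmemBf z hz _ (mem_addb_of_lit hl hμ₀ hpre₀)
        · exact List.mem_append_right _ (hInv.cLit μ₀ ν σ' l hl hμ₀ hν h)
      · -- cDia
        intro μ'' σ' χ h
        rcases List.mem_append.mp h with h | h
        · exact Or.inr (List.mem_append_left _ (hBnonlit _ h (fun hh => hh)))
        · rcases hInv.cDia μ'' σ' χ h with hc | hc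
          · exact Or.inl (hc.imp fun i hi => List.mem_append_right _ hi)
          · exact Or.inr (List.mem_append_right _ (mem_of_mem_cons_of_ne hc (by simp)))
      · -- cEx
        intro μ'' σ' χ h
        rcases List.mem_append.mp h with h | h
        · exact Or.inr (List.mem_append_left _ (hBnonlit _ h (fun hh => hh)))
        · rcases hInv.cEx μ'' σ' χ h with hc | hc
          · exact Or.inl (hc.imp fun i hi => List.mem_append_right _ hi)
          · exact Or.inr (List.mem_append_right _ (mem_of_mem_cons_of_ne hc (by simp)))
      · -- cBox
        intro μ₀ ν σ₀ i χb χo hbox hocc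
        rcases List.mem_append.mp hbox with hbox | hbox
        · exact Or.inr (List.mem_append_left _ (hBnonlit _ hbox (fun hh => hh)))
        · by_cases heq : ((μ₀,σ₀,RML.box χb) : PrefixedFormula) = (μ,σ,RML.box ψ)
          · obtain ⟨h1, h2, h3⟩ : μ₀ = μ ∧ σ₀ = σ ∧ χb = ψ := by
              simpa [Prod.ext_iff] using heq
            rcases List.mem_append.mp hocc with hocc | hocc
            · obtain ⟨z, hz, hσ', -, -, -, -⟩ := hBprop _ hocc
              simp only at hσ'
              refine Or.inl (List.mem_append_left _ (hmemBf z hz _ ?_))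
              rw [h1, h3, hσ']
              exact self_mem_addb hμ
            · have hzch : ((μ₀ ++ ν, σ₀ ++ [i], χo) : PrefixedFormula) ∈ chList b μ σ := by
                rw [mem_chList]
                refine ⟨hocc, ?_, ?_⟩
                · rw [h1]; exact List.prefix_append μ ν
                · rw [h2]; exact isChild_iff.mpr ⟨i, rfl⟩
              refine Or.inl (List.mem_append_left _ (hmemBf _ hzch _ ?_))
              rw [h1, h3]
              exact self_mem_addb hμ
          · rcases List.mem_append.mp hocc with hocc | hocc
            · obtain ⟨z, hz, hσ', -, -, hpre, -⟩ := hBprop _ hocc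
              simp only at hσ' hpre
              obtain ⟨hzb, hzpre, -⟩ := hLfact z hz
              have hpre₀ : μ₀ <+: z.1 := ((List.prefix_append μ₀ ν).trans hpre).trans hzpre
              obtain ⟨ν', hν'⟩ := hpre₀
              have hz' : (μ₀ ++ ν', σ₀ ++ [i], z.2.2) ∈ b := by
                rw [hν', hσ']
                have : (z.1, z.2.1, z.2.2) = z := rfl
                rw [this]
                exact hzb
              rcases hInv.cBox μ₀ ν' σ₀ i χb z.2.2 hbox hz' with hc | hc
              · exact Or.inl (List.mem_append_right _ hc)
              · exact Or.inr (List.mem_append_right _ (mem_of_mem_cons_of_ne hc heq))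
            · rcases hInv.cBox μ₀ ν σ₀ i χb χo hbox hocc with hc | hc
              · exact Or.inl (List.mem_append_right _ hc)
              · exact Or.inr (List.mem_append_right _ (mem_of_mem_cons_of_ne hc heq))
    | ex ψ =>
      obtain ⟨y, hy, hysat⟩ := sat_ex_elim hsat
      classical
      have hμ'ne : (μ ++ [n] : List ℕ) ≠ [] := by simp
      set 𝔐' : List ℕ → List ℕ → PM :=
        fun a c => if a = μ ++ [n] ∧ c = σ then y else 𝔐 a c with h𝔐'
      set U' : List ℕ → List ℕ → Prop :=
        fun a c => U a c ∨ (a = μ ++ [n] ∧ c = σ) with hU'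
      have hnotn : ∀ a c, U a c → a ≠ μ ++ [n] := by
        intro a c hUa hcontra
        have := (hInv.uBound a c hUa).1 n (by rw [hcontra]; simp)
        omega
      have h𝔐old : ∀ a c, U a c → 𝔐' a c = 𝔐 a c := by
        intro a c hUa
        rw [h𝔐']
        simp only
        rw [if_neg]
        rintro ⟨h1, h2⟩
        exact hnotn a c hUa h1
      have h𝔐b : ∀ z ∈ b, 𝔐' z.1 z.2.1 = 𝔐 z.1 z.2.1 :=
        fun z hz => h𝔐old _ _ (hInv.inU z hz)
      have h𝔐new : 𝔐' (μ ++ [n]) σ = y := by rw [h𝔐']; simp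
      have hrefF : ∀ π, π ≠ [] → π <+: μ ++ [n] → Refines (𝔐' (μ ++ [n]) σ) (𝔐' π σ) := by
        intro π hne hpre
        rw [h𝔐new]
        rcases List.prefix_concat_iff.mp hpre with rfl | hpre₀
        · rw [h𝔐new]; exact Refines.refl y
        · have hUπ : U π σ := hInv.uPre π μ σ hUx hne hpre₀
          rw [h𝔐old π σ hUπ]
          exact hy.trans (hInv.refc π μ σ hUπ hUx hpre₀)
      have hsatF : (𝔐' (μ ++ [n]) σ).sat ψ := by rw [h𝔐new]; exact hysat
      have hBprop : ∀ z ∈ addb (μ ++ [n]) σ ψ,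
          z.2.1 = σ ∧ z.1 ≠ [] ∧ z.1 <+: μ ++ [n] ∧ z.2.2 = ψ := by
        intro z hz
        obtain ⟨h1, h2, h3, h4⟩ := mem_addb' hμ'ne hz
        exact ⟨h1, h3, h4, h2⟩
      have hBnonlit : ∀ z ∈ addb (μ ++ [n]) σ ψ, ¬ IsLiteral z.2.2 → z ∈ addp (μ ++ [n]) σ ψ := by
        intro z hz hnl
        have h2 := (hBprop z hz).2.2.2
        rw [h2] at hnl
        rw [addb_nonlit hnl] at hz
        simp only [List.mem_singleton] at hz
        subst hz
        rw [addp_nonlit hnl]; simp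
      have hsatB : ∀ z ∈ addb (μ ++ [n]) σ ψ ++ b, (𝔐' z.1 z.2.1).sat z.2.2 := by
        intro z hz
        rcases List.mem_append.mp hz with hz | hz
        · have h := sat_addb_gen (F := fun a => 𝔐' a σ) hμ'ne hrefF hsatF z hz
          rw [(hBprop z hz).1]; exact h
        · rw [h𝔐b z hz]; exact hInv.sat z hz
      have hfresh : ∀ σ' χ, ((μ ++ [n], σ', χ) : PrefixedFormula) ∉ {x | x ∈ b} := by
        intro σ' χ hc
        have := (hInv.bound _ hc).1 n (by simp)
        omega
      have h1 := Branch.exRule n hInv.branch hxb hfresh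
      have h2 := branch_addb h1 hμ'ne
      have hbeq : {x | x ∈ addb (μ ++ [n]) σ ψ} ∪ {x | x ∈ b}
          = {x | x ∈ addb (μ ++ [n]) σ ψ ++ b} := by
        ext z
        simp only [Set.mem_union, Set.mem_setOf_eq, List.mem_append]
      rw [hbeq] at h2
      refine IH (msr φ (addp (μ ++ [n]) σ ψ ++ P')) (msr_lt hszx ?_)
        (addp (μ ++ [n]) σ ψ ++ P') (addb (μ ++ [n]) σ ψ ++ b) (n+1) 𝔐' U' rfl ?_
      · intro a ha
        obtain ⟨rfl, -⟩ := mem_addp ha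
        refine rank_lt_same ?_
        show sz ψ < sz ψ + 1
        omega
      refine ⟨h2, ?_, ?_, ?_, ?_, ?_, ?_, ?_, ?_, hsatB, ?_, ?_, ?_, ?_, ?_, ?_, ?_, ?_⟩
      · -- psub
        intro z hz
        rcases List.mem_append.mp hz with hz | hz
        · exact List.mem_append_left _ (addp_sub_addb hμ'ne hz)
        · exact List.mem_append_right _ (hInv.psub z (List.mem_cons_of_mem _ hz))
      · -- szb
        intro z hz
        rcases List.mem_append.mp hz with hz | hz
        · rw [(hBprop z hz).2.2.2]
          have hszx' : sz ψ + 1 ≤ sz φ := hszx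
          omega
        · exact hInv.szb z hz
      · -- mdb
        intro z hz
        rcases List.mem_append.mp hz with hz | hz
        · obtain ⟨hσ', -, -, hform⟩ := hBprop z hz
          rw [hσ', hform]
          exact hmdx
        · exact hInv.mdb z hz
      · -- bound
        intro z hz
        rcases List.mem_append.mp hz with hz | hz
        · obtain ⟨hσ', -, hpre, -⟩ := hBprop z hz
          obtain ⟨hb1, hb2⟩ := hInv.bound _ hxb
          rw [hσ']
          constructor
          · intro k hk
            have hk' : k ∈ μ ++ [n] := hpre.subset hk
            rcases List.mem_append.mp hk' with hk' | hk'
            · exact Nat.lt_succ_of_lt (hb1 k hk')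
            · simp at hk'; omega
          · exact fun k hk => Nat.lt_succ_of_lt (hb2 k hk)
        · obtain ⟨hb1, hb2⟩ := hInv.bound z hz
          exact ⟨fun k hk => Nat.lt_succ_of_lt (hb1 k hk),
            fun k hk => Nat.lt_succ_of_lt (hb2 k hk)⟩
      · -- uBound
        intro a c hUa
        rcases hUa with hUa | ⟨rfl, rfl⟩
        · obtain ⟨hb1, hb2⟩ := hInv.uBound a c hUa
          exact ⟨fun k hk => Nat.lt_succ_of_lt (hb1 k hk),
            fun k hk => Nat.lt_succ_of_lt (hb2 k hk)⟩
        · obtain ⟨hb1, hb2⟩ := hInv.uBound μ c hUx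
          constructor
          · intro k hk
            rcases List.mem_append.mp hk with hk | hk
            · exact Nat.lt_succ_of_lt (hb1 k hk)
            · simp at hk; omega
          · exact fun k hk => Nat.lt_succ_of_lt (hb2 k hk)
      · -- inU
        intro z hz
        rcases List.mem_append.mp hz with hz | hz
        · obtain ⟨hσ', hne, hpre, -⟩ := hBprop z hz
          rw [hσ']
          rcases List.prefix_concat_iff.mp hpre with heq | hpre₀
          · exact Or.inr ⟨heq, rfl⟩
          · exact Or.inl (hInv.uPre z.1 μ σ hUx hne hpre₀)
        · exact Or.inl (hInv.inU z hz)
      · -- uNe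
        intro a c hUa
        rcases hUa with hUa | ⟨rfl, rfl⟩
        · exact hInv.uNe a c hUa
        · exact hμ'ne
      · -- uPre
        intro μ₀ a c hUa h0 hp
        rcases hUa with hUa | ⟨rfl, rfl⟩
        · exact Or.inl (hInv.uPre μ₀ a c hUa h0 hp)
        · rcases List.prefix_concat_iff.mp hp with heq | hpre₀
          · exact Or.inr ⟨heq, rfl⟩
          · exact Or.inl (hInv.uPre μ₀ μ c hUx h0 hpre₀)
      · -- refc
        intro a a' c hUa hUa' hp
        rcases hUa' with hUa' | ⟨rfl, rfl⟩
        · rcases hUa with hUa | ⟨rfl, rfl⟩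
          · rw [h𝔐old a c hUa, h𝔐old a' c hUa']
            exact hInv.refc a a' c hUa hUa' hp
          · exact absurd ((hInv.uBound a' c hUa').1 n (hp.subset (by simp))) (by omega)
        · rcases hUa with hUa | ⟨rfl, -⟩
          · rw [h𝔐new, h𝔐old a c hUa]
            have hane : a ≠ μ ++ [n] := hnotn a c hUa
            rcases List.prefix_concat_iff.mp hp with heq | hpre₀
            · exact absurd heq hane
            · exact hy.trans (hInv.refc a μ c hUa hUx hpre₀)
          · rw [h𝔐new]
            exact Refines.refl y
      · -- vert
        intro a c i hU1 hU2
        rcases hU1 with hU1 | ⟨rfl, rfl⟩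
        · rcases hU2 with hU2 | ⟨heq, heq2⟩
          · rw [h𝔐old a c hU1, h𝔐old a (c ++ [i]) hU2]
            exact hInv.vert a c i hU1 hU2
          · exact absurd heq (hnotn a c hU1)
        · rcases hU2 with hU2 | ⟨-, heq2⟩
          · exact absurd rfl (hnotn _ _ hU2)
          · exact absurd heq2 (by simp)
      · -- cAnd
        intro μ'' σ' χ₁ χ₂ h
        rcases List.mem_append.mp h with h | h
        · exact Or.inr (List.mem_append_left _ (hBnonlit _ h (fun hh => hh)))
        · rcases hInv.cAnd μ'' σ' χ₁ χ₂ h with hc | hc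
          · exact Or.inl ⟨List.mem_append_right _ hc.1, List.mem_append_right _ hc.2⟩
          · exact Or.inr (List.mem_append_right _ (mem_of_mem_cons_of_ne hc (by simp)))
      · -- cOr
        intro μ'' σ' χ₁ χ₂ h
        rcases List.mem_append.mp h with h | h
        · exact Or.inr (List.mem_append_left _ (hBnonlit _ h (fun hh => hh)))
        · rcases hInv.cOr μ'' σ' χ₁ χ₂ h with hc | hc
          · exact Or.inl (hc.imp (List.mem_append_right _) (List.mem_append_right _))
          · exact Or.inr (List.mem_append_right _ (mem_of_mem_cons_of_ne hc (by simp)))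
      · -- cLit
        intro μ₀ ν σ' l hl hμ₀ hν h
        rcases List.mem_append.mp h with h | h
        · obtain ⟨hσ', hne, hpre, hform⟩ := hBprop _ h
          have hpre₀ : μ₀ <+: μ ++ [n] := (List.prefix_append μ₀ ν).trans hpre
          refine List.mem_append_left _ ?_
          simp only at hσ' hform
          subst hσ'
          subst hform
          exact mem_addb_of_lit hl hμ₀ hpre₀
        · exact List.mem_append_right _ (hInv.cLit μ₀ ν σ' l hl hμ₀ hν h)
      · -- cDia
        intro μ'' σ' χ h
        rcases List.mem_append.mp h with h | h
        · exact Or.inr (List.mem_append_left _ (hBnonlit _ h (fun hh => hh)))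
        · rcases hInv.cDia μ'' σ' χ h with hc | hc
          · exact Or.inl (hc.imp fun i hi => List.mem_append_right _ hi)
          · exact Or.inr (List.mem_append_right _ (mem_of_mem_cons_of_ne hc (by simp)))
      · -- cEx
        intro μ'' σ' χ h
        rcases List.mem_append.mp h with h | h
        · exact Or.inr (List.mem_append_left _ (hBnonlit _ h (fun hh => hh)))
        · by_cases heq : ((μ'',σ',RML.ex χ) : PrefixedFormula) = (μ,σ,RML.ex ψ)
          · obtain ⟨rfl, rfl, rfl⟩ : μ'' = μ ∧ σ' = σ ∧ χ = ψ := by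
              simpa [Prod.ext_iff] using heq
            exact Or.inl ⟨n, List.mem_append_left _ (self_mem_addb hμ'ne)⟩
          · rcases hInv.cEx μ'' σ' χ h with hc | hc
            · exact Or.inl (hc.imp fun i hi => List.mem_append_right _ hi)
            · exact Or.inr (List.mem_append_right _ (mem_of_mem_cons_of_ne hc heq))
      · -- cBox
        intro μ₀ ν σ₀ i χb χo hbox hocc
        rcases List.mem_append.mp hbox with hbox | hbox
        · exact Or.inr (List.mem_append_left _ (hBnonlit _ hbox (fun hh => hh)))
        · rcases List.mem_append.mp hocc with hocc | hocc
          · obtain ⟨hσ', hne, hpre, -⟩ := hBprop _ hocc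
            simp only at hσ' hpre
            have hμ₀ne : μ₀ ≠ μ ++ [n] := by
              intro hcontra
              have := (hInv.bound _ hbox).1 n (by rw [hcontra]; simp)
              omega
            have hpre₁ : μ₀ <+: μ ++ [n] := (List.prefix_append μ₀ ν).trans hpre
            have hpre₀ : μ₀ <+: μ := by
              rcases List.prefix_concat_iff.mp hpre₁ with heq | h'
              · exact absurd heq hμ₀ne
              · exact h'
            obtain ⟨ν', hν'⟩ := hpre₀
            have hx' : (μ₀ ++ ν', σ₀ ++ [i], RML.ex ψ) ∈ b := by
              rw [hν', hσ']; exact hxb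
            rcases hInv.cBox μ₀ ν' σ₀ i χb (RML.ex ψ) hbox hx' with hc | hc
            · exact Or.inl (List.mem_append_right _ hc)
            · exact Or.inr (List.mem_append_right _ (mem_of_mem_cons_of_ne hc (by simp)))
          · rcases hInv.cBox μ₀ ν σ₀ i χb χo hbox hocc with hc | hc
            · exact Or.inl (List.mem_append_right _ hc)
            · exact Or.inr (List.mem_append_right _ (mem_of_mem_cons_of_ne hc (by simp)))

end RMLProof
namespace RMLProof

lemma forward {φ : RML} (h : Satisfiable φ) :
    ∃ b' : Set PrefixedFormula, Branch φ b' ∧ Complete b' ∧ Accepting b' := by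
  obtain ⟨W, M, s, hs⟩ := h
  refine main φ (msr φ (addp [1] [1] φ)) (addp [1] [1] φ) [([1],[1],φ)] 2
    (fun _ _ => ⟨W, M, s⟩) (fun a c => a = [1] ∧ c = [1]) rfl ?_
  have hb0 : {x : PrefixedFormula | x ∈ [(([1] : List ℕ),([1] : List ℕ),φ)]}
      = {(([1] : List ℕ),([1] : List ℕ),φ)} := by
    ext x; simp
  refine ⟨hb0 ▸ Branch.init, ?_, ?_, ?_, ?_, ?_, ?_, ?_, ?_, ?_, ?_, ?_, ?_, ?_, ?_, ?_,
    ?_, ?_⟩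
  · intro y hy; obtain ⟨rfl, -⟩ := mem_addp hy; simp
  · intro y hy; simp at hy; subst hy; exact le_refl _
  · intro y hy; simp at hy; subst hy; simp
  · intro y hy; simp at hy; subst hy
    constructor <;> (intro k hk; simp at hk; omega)
  · rintro a c ⟨rfl, rfl⟩
    constructor <;> (intro k hk; simp at hk; omega)
  · intro y hy; simp at hy; subst hy; exact ⟨rfl, rfl⟩
  · rintro a c ⟨rfl, -⟩; simp
  · rintro μ₀ a c ⟨rfl, rfl⟩ h0 hp
    rcases prefix_single hp with rfl | rfl
    · exact absurd rfl h0
    · exact ⟨rfl, rfl⟩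
  · intro y hy; simp at hy; subst hy; exact hs
  · rintro a a' c ⟨rfl, rfl⟩ ⟨rfl, -⟩ -
    exact Refines.refl _
  · rintro a c i ⟨-, rfl⟩ ⟨-, hc⟩
    exact absurd (congrArg List.length hc) (by simp)
  · intro μ' σ' χ₁ χ₂ h
    simp at h
    obtain ⟨rfl, rfl, heq⟩ := h
    subst heq
    refine Or.inr ?_
    rw [addp_nonlit (ψ := RML.and χ₁ χ₂) (fun hh => hh)]
    simp
  · intro μ' σ' χ₁ χ₂ h
    simp at h
    obtain ⟨rfl, rfl, heq⟩ := h
    subst heq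
    refine Or.inr ?_
    rw [addp_nonlit (ψ := RML.or χ₁ χ₂) (fun hh => hh)]
    simp
  · intro μ₀ ν σ' l hl h0 hν h
    simp at h
    obtain ⟨happ, -⟩ := h
    exfalso
    have hlen := congrArg List.length happ
    simp at hlen
    have h1 := List.length_pos_iff.mpr h0
    have h2 := List.length_pos_iff.mpr hν
    omega
  · intro μ' σ' χ h
    simp at h
    obtain ⟨rfl, rfl, heq⟩ := h
    subst heq
    refine Or.inr ?_
    rw [addp_nonlit (ψ := RML.dia χ) (fun hh => hh)]
    simp
  · intro μ' σ' χ h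
    simp at h
    obtain ⟨rfl, rfl, heq⟩ := h
    subst heq
    refine Or.inr ?_
    rw [addp_nonlit (ψ := RML.ex χ) (fun hh => hh)]
    simp
  · intro μ' ν σ' i χb χo hbox hocc
    simp at hbox
    obtain ⟨rfl, rfl, heq⟩ := hbox
    subst heq
    refine Or.inr ?_
    rw [addp_nonlit (ψ := RML.box χb) (fun hh => hh)]
    simp

end RMLProof

/-- An RML^∃ formula `φ` is satisfiable iff there exists a
complete accepting tableau branch starting from `(1,1) φ`. -/
theorem satisfiable_iff_complete_accepting_branch (φ : RML) :
    Satisfiable φ ↔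
      ∃ b : Set PrefixedFormula, Branch φ b ∧ Complete b ∧ Accepting b := by
  constructor
  · exact fun h => RMLProof.forward h
  · rintro ⟨b, hB, hC, hA⟩
    exact RMLProof.backward hB hC hA
end

section
/- Let b be a tableau branch for an RML^∃ formula φ. If some prefixed formula with model prefix μ.m (for μ a nonempty string and m ∈ ℕ) occurs in b, then b contains a prefixed formula of the form (μ,σ) ∃_r χ for some state prefix σ and some RML^∃ formula χ. Similarly, if some prefixed formula with state prefix σ.i occurs in b (for σ a nonempty string and i ∈ ℕ), then b contains a prefixed formula of the form (μ,σ) ◇χ or (μ,σ) □χ for some model prefix μ and some formula χ. -/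
lemma split_last {α : Type*} {a b c : List α} {i : α} (hb : b ≠ []) (h : a ++ b = c ++ [i]) :
    ∃ b', b = b' ++ [i] ∧ a ++ b' = c := by
  obtain ⟨b', j, rfl⟩ := b.eq_nil_or_concat.resolve_left hb
  rw [List.concat_eq_append, ← List.append_assoc] at h
  obtain ⟨h1, h2⟩ := List.append_inj' h rfl
  obtain ⟨rfl, -⟩ := List.cons.inj h2
  exact ⟨b', by simp, h1⟩

lemma triple_eq {a b d e : List ℕ} {c f : RML}
    (h : ((a, b, c) : PrefixedFormula) = (d, e, f)) : a = d ∧ b = e ∧ c = f := by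
  refine ⟨congrArg Prod.fst h, ?_, ?_⟩
  · exact congrArg (Prod.fst ∘ Prod.snd) h
  · exact congrArg (Prod.snd ∘ Prod.snd) h

lemma extended_prefix_origin_strong (φ : RML) (b : Set PrefixedFormula)
    (hb : Branch φ b) :
    (∀ (μ ν σ' : List ℕ) (ψ : RML), μ ≠ [] → ν ≠ [] →
        (μ ++ ν, σ', ψ) ∈ b → ∃ (σ : List ℕ) (χ : RML), (μ, σ, RML.ex χ) ∈ b) ∧
    (∀ (μ' σ τ : List ℕ) (ψ : RML), σ ≠ [] → τ ≠ [] →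
        (μ', σ ++ τ, ψ) ∈ b → ∃ (μ : List ℕ) (χ : RML),
          (μ, σ, RML.dia χ) ∈ b ∨ (μ, σ, RML.box χ) ∈ b) := by
  induction hb with
  | init =>
    constructor
    · rintro μ ν σ' ψ hμ hν h
      simp only [Set.mem_singleton_iff, Prod.mk.injEq] at h
      have := congrArg List.length h.1
      simp at this
      have := List.length_pos_iff.mpr hμ
      have := List.length_pos_iff.mpr hν
      omega
    · rintro μ' σ τ ψ hσ hτ h
      simp only [Set.mem_singleton_iff, Prod.mk.injEq] at h
      have := congrArg List.length h.2.1
      simp at this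
      have := List.length_pos_iff.mpr hσ
      have := List.length_pos_iff.mpr hτ
      omega
  | andRule hb hmem ih =>
    rename_i b₀ μ σ ψ₁ ψ₂
    obtain ⟨ih1, ih2⟩ := ih
    constructor
    · rintro μ₀ ν₀ σ' ψ hμ hν h
      rcases h with h | h | h
      · obtain ⟨h1, h2, h3⟩ := triple_eq h
        obtain ⟨σ₁, χ, hχ⟩ := ih1 μ₀ ν₀ σ' (RML.and ψ₁ ψ₂) hμ hν (by rw [h1, h2]; exact hmem)
        exact ⟨σ₁, χ, Or.inr (Or.inr hχ)⟩
      · obtain ⟨h1, h2, h3⟩ := triple_eq h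
        obtain ⟨σ₁, χ, hχ⟩ := ih1 μ₀ ν₀ σ' (RML.and ψ₁ ψ₂) hμ hν (by rw [h1, h2]; exact hmem)
        exact ⟨σ₁, χ, Or.inr (Or.inr hχ)⟩
      · obtain ⟨σ₁, χ, hχ⟩ := ih1 μ₀ ν₀ σ' ψ hμ hν h
        exact ⟨σ₁, χ, Or.inr (Or.inr hχ)⟩
    · rintro μ' σ₀ τ ψ hσ hτ h
      rcases h with h | h | h
      · obtain ⟨h1, h2, h3⟩ := triple_eq h
        obtain ⟨μ₁, χ, hχ⟩ := ih2 μ σ₀ τ (RML.and ψ₁ ψ₂) hσ hτ (by rw [← h2] at hmem; exact hmem)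
        exact ⟨μ₁, χ, hχ.imp (Or.inr ∘ Or.inr) (Or.inr ∘ Or.inr)⟩
      · obtain ⟨h1, h2, h3⟩ := triple_eq h
        obtain ⟨μ₁, χ, hχ⟩ := ih2 μ σ₀ τ (RML.and ψ₁ ψ₂) hσ hτ (by rw [← h2] at hmem; exact hmem)
        exact ⟨μ₁, χ, hχ.imp (Or.inr ∘ Or.inr) (Or.inr ∘ Or.inr)⟩
      · obtain ⟨μ₁, χ, hχ⟩ := ih2 μ' σ₀ τ ψ hσ hτ h
        exact ⟨μ₁, χ, hχ.imp (Or.inr ∘ Or.inr) (Or.inr ∘ Or.inr)⟩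
  | orLeft hb hmem ih =>
    rename_i b₀ μ σ ψ₁ ψ₂
    obtain ⟨ih1, ih2⟩ := ih
    constructor
    · rintro μ₀ ν₀ σ' ψ hμ hν h
      rcases h with h | h
      · obtain ⟨h1, h2, h3⟩ := triple_eq h
        obtain ⟨σ₁, χ, hχ⟩ := ih1 μ₀ ν₀ σ' (RML.or ψ₁ ψ₂) hμ hν (by rw [h1, h2]; exact hmem)
        exact ⟨σ₁, χ, Or.inr hχ⟩
      · obtain ⟨σ₁, χ, hχ⟩ := ih1 μ₀ ν₀ σ' ψ hμ hν h
        exact ⟨σ₁, χ, Or.inr hχ⟩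
    · rintro μ' σ₀ τ ψ hσ hτ h
      rcases h with h | h
      · obtain ⟨h1, h2, h3⟩ := triple_eq h
        obtain ⟨μ₁, χ, hχ⟩ := ih2 μ σ₀ τ (RML.or ψ₁ ψ₂) hσ hτ (by rw [← h2] at hmem; exact hmem)
        exact ⟨μ₁, χ, hχ.imp Or.inr Or.inr⟩
      · obtain ⟨μ₁, χ, hχ⟩ := ih2 μ' σ₀ τ ψ hσ hτ h
        exact ⟨μ₁, χ, hχ.imp Or.inr Or.inr⟩
  | orRight hb hmem ih =>
    rename_i b₀ μ σ ψ₁ ψ₂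
    obtain ⟨ih1, ih2⟩ := ih
    constructor
    · rintro μ₀ ν₀ σ' ψ hμ hν h
      rcases h with h | h
      · obtain ⟨h1, h2, h3⟩ := triple_eq h
        obtain ⟨σ₁, χ, hχ⟩ := ih1 μ₀ ν₀ σ' (RML.or ψ₁ ψ₂) hμ hν (by rw [h1, h2]; exact hmem)
        exact ⟨σ₁, χ, Or.inr hχ⟩
      · obtain ⟨σ₁, χ, hχ⟩ := ih1 μ₀ ν₀ σ' ψ hμ hν h
        exact ⟨σ₁, χ, Or.inr hχ⟩
    · rintro μ' σ₀ τ ψ hσ hτ h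
      rcases h with h | h
      · obtain ⟨h1, h2, h3⟩ := triple_eq h
        obtain ⟨μ₁, χ, hχ⟩ := ih2 μ σ₀ τ (RML.or ψ₁ ψ₂) hσ hτ (by rw [← h2] at hmem; exact hmem)
        exact ⟨μ₁, χ, hχ.imp Or.inr Or.inr⟩
      · obtain ⟨μ₁, χ, hχ⟩ := ih2 μ' σ₀ τ ψ hσ hτ h
        exact ⟨μ₁, χ, hχ.imp Or.inr Or.inr⟩
  | litRule hb hmem hlit hμne hνne ih =>
    rename_i b₀ μ ν σ l
    obtain ⟨ih1, ih2⟩ := ih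
    constructor
    · rintro μ₀ ν₀ σ' ψ hμ hν h
      rcases h with h | h
      · obtain ⟨h1, h2, h3⟩ := triple_eq h
        obtain ⟨σ₁, χ, hχ⟩ := ih1 μ₀ (ν₀ ++ ν) σ' l hμ (by simp [hν])
          (by rw [← List.append_assoc, h1, h2]; exact hmem)
        exact ⟨σ₁, χ, Or.inr hχ⟩
      · obtain ⟨σ₁, χ, hχ⟩ := ih1 μ₀ ν₀ σ' ψ hμ hν h
        exact ⟨σ₁, χ, Or.inr hχ⟩
    · rintro μ' σ₀ τ ψ hσ hτ h
      rcases h with h | h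
      · obtain ⟨h1, h2, h3⟩ := triple_eq h
        obtain ⟨μ₁, χ, hχ⟩ := ih2 (μ ++ ν) σ₀ τ l hσ hτ (by rw [← h2] at hmem; exact hmem)
        exact ⟨μ₁, χ, hχ.imp Or.inr Or.inr⟩
      · obtain ⟨μ₁, χ, hχ⟩ := ih2 μ' σ₀ τ ψ hσ hτ h
        exact ⟨μ₁, χ, hχ.imp Or.inr Or.inr⟩
  | diaRule i hb hmem hnew ih =>
    rename_i b₀ μ σ ψ
    obtain ⟨ih1, ih2⟩ := ih
    constructor
    · rintro μ₀ ν₀ σ' ψ' hμ hν h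
      rcases h with h | h
      · obtain ⟨h1, h2, h3⟩ := triple_eq h
        obtain ⟨σ₁, χ, hχ⟩ := ih1 μ₀ ν₀ σ (RML.dia ψ) hμ hν (by rw [h1]; exact hmem)
        exact ⟨σ₁, χ, Or.inr hχ⟩
      · obtain ⟨σ₁, χ, hχ⟩ := ih1 μ₀ ν₀ σ' ψ' hμ hν h
        exact ⟨σ₁, χ, Or.inr hχ⟩
    · rintro μ' σ₀ τ ψ' hσ hτ h
      rcases h with h | h
      · obtain ⟨h1, h2, h3⟩ := triple_eq h
        obtain ⟨τ', rfl, hτ'⟩ := split_last hτ h2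
        rcases eq_or_ne τ' [] with rfl | hτ'ne
        · simp only [List.append_nil] at hτ'
          subst hτ'
          exact ⟨μ, ψ, Or.inl (Or.inr hmem)⟩
        · obtain ⟨μ₁, χ, hχ⟩ := ih2 μ σ₀ τ' (RML.dia ψ) hσ hτ'ne (by rw [hτ']; exact hmem)
          exact ⟨μ₁, χ, hχ.imp Or.inr Or.inr⟩
      · obtain ⟨μ₁, χ, hχ⟩ := ih2 μ' σ₀ τ ψ' hσ hτ h
        exact ⟨μ₁, χ, hχ.imp Or.inr Or.inr⟩
  | exRule m hb hmem hnew ih =>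
    rename_i b₀ μ σ ψ
    obtain ⟨ih1, ih2⟩ := ih
    constructor
    · rintro μ₀ ν₀ σ' ψ' hμ hν h
      rcases h with h | h
      · obtain ⟨h1, h2, h3⟩ := triple_eq h
        obtain ⟨ν', rfl, hν'⟩ := split_last hν h1
        rcases eq_or_ne ν' [] with rfl | hν'ne
        · simp only [List.append_nil] at hν'
          subst hν'
          exact ⟨σ, ψ, Or.inr hmem⟩
        · obtain ⟨σ₁, χ, hχ⟩ := ih1 μ₀ ν' σ (RML.ex ψ) hμ hν'ne (by rw [hν']; exact hmem)
          exact ⟨σ₁, χ, Or.inr hχ⟩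
      · obtain ⟨σ₁, χ, hχ⟩ := ih1 μ₀ ν₀ σ' ψ' hμ hν h
        exact ⟨σ₁, χ, Or.inr hχ⟩
    · rintro μ' σ₀ τ ψ' hσ hτ h
      rcases h with h | h
      · obtain ⟨h1, h2, h3⟩ := triple_eq h
        obtain ⟨μ₁, χ, hχ⟩ := ih2 μ σ₀ τ (RML.ex ψ) hσ hτ (by rw [h2]; exact hmem)
        exact ⟨μ₁, χ, hχ.imp Or.inr Or.inr⟩
      · obtain ⟨μ₁, χ, hχ⟩ := ih2 μ' σ₀ τ ψ' hσ hτ h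
        exact ⟨μ₁, χ, hχ.imp Or.inr Or.inr⟩
  | boxRule hb hmem hwit ih =>
    rename_i b₀ μ ν σ ψ i χ₀
    obtain ⟨ih1, ih2⟩ := ih
    constructor
    · rintro μ₀ ν₀ σ' ψ' hμ hν h
      rcases h with h | h
      · obtain ⟨h1, h2, h3⟩ := triple_eq h
        obtain ⟨σ₁, χ, hχ⟩ := ih1 μ₀ ν₀ σ (RML.box ψ) hμ hν (by rw [h1]; exact hmem)
        exact ⟨σ₁, χ, Or.inr hχ⟩
      · obtain ⟨σ₁, χ, hχ⟩ := ih1 μ₀ ν₀ σ' ψ' hμ hν h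
        exact ⟨σ₁, χ, Or.inr hχ⟩
    · rintro μ' σ₀ τ ψ' hσ hτ h
      rcases h with h | h
      · obtain ⟨h1, h2, h3⟩ := triple_eq h
        obtain ⟨τ', rfl, hτ'⟩ := split_last hτ h2
        rcases eq_or_ne τ' [] with rfl | hτ'ne
        · simp only [List.append_nil] at hτ'
          subst hτ'
          exact ⟨μ, ψ, Or.inr (Or.inr hmem)⟩
        · obtain ⟨μ₁, χ, hχ⟩ := ih2 μ σ₀ τ' (RML.box ψ) hσ hτ'ne (by rw [hτ']; exact hmem)
          exact ⟨μ₁, χ, hχ.imp Or.inr Or.inr⟩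
      · obtain ⟨μ₁, χ, hχ⟩ := ih2 μ' σ₀ τ ψ' hσ hτ h
        exact ⟨μ₁, χ, hχ.imp Or.inr Or.inr⟩

/-- In any tableau branch `b` for `φ`: if some prefixed formula
with model prefix `μ.m` occurs in `b` (for `μ` nonempty), then `b` contains
some `(μ,σ) ∃_r χ`; and if some prefixed formula with state prefix `σ.i`
occurs in `b` (for `σ` nonempty), then `b` contains some `(μ,σ) ◇χ` or
`(μ,σ) □χ`. -/
theorem extended_prefix_origin (φ : RML) (b : Set PrefixedFormula)
    (hb : Branch φ b) :
    (∀ (μ : List ℕ) (m : ℕ) (σ' : List ℕ) (ψ : RML), μ ≠ [] →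
        (μ ++ [m], σ', ψ) ∈ b → ∃ (σ : List ℕ) (χ : RML), (μ, σ, RML.ex χ) ∈ b) ∧
    (∀ (μ' σ : List ℕ) (i : ℕ) (ψ : RML), σ ≠ [] →
        (μ', σ ++ [i], ψ) ∈ b → ∃ (μ : List ℕ) (χ : RML),
          (μ, σ, RML.dia χ) ∈ b ∨ (μ, σ, RML.box χ) ∈ b) := by
  obtain ⟨h1, h2⟩ := extended_prefix_origin_strong φ b hb
  exact ⟨fun μ m σ' ψ hμ h => h1 μ [m] σ' ψ hμ (by simp) h,
         fun μ' σ i ψ hσ h => h2 μ' σ [i] ψ hσ (by simp) h⟩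
end

section
/- Let ψ be a variable-free modal formula (built from ⊤, ⊥, ∧, ∨, ◇, □, with no propositional variables and no refinement quantifiers), and let M₀ be the Kripke model consisting of a single state s₀ with a transition from s₀ to itself and V₀(s₀)=∅. Then M₀,s₀ ⊨ ∃_r ψ if and only if ψ is satisfiable in some pointed Kripke model. Consequently, the map ψ ↦ (M₀, s₀, ∃_r ψ) reduces satisfiability of variable-free modal formulas to model checking of RML formulas with a single refinement quantifier. -/
/-- Variable-free modal formulas: ⊤ | ⊥ | ψ∧ψ | ψ∨ψ | ◇ψ | □ψ. -/
inductive ModalFormula : Type where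
  | top : ModalFormula
  | bot : ModalFormula
  | and : ModalFormula → ModalFormula → ModalFormula
  | or  : ModalFormula → ModalFormula → ModalFormula
  | dia : ModalFormula → ModalFormula
  | box : ModalFormula → ModalFormula

/-- Standard Kripke semantics of variable-free modal formulas. -/
def SatM {W : Type} (M : Kripke W) : W → ModalFormula → Prop
  | _, ModalFormula.top => True
  | _, ModalFormula.bot => False
  | s, ModalFormula.and ψ₁ ψ₂ => SatM M s ψ₁ ∧ SatM M s ψ₂
  | s, ModalFormula.or ψ₁ ψ₂ => SatM M s ψ₁ ∨ SatM M s ψ₂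
  | s, ModalFormula.dia ψ => ∃ t, M.R s t ∧ SatM M t ψ
  | s, ModalFormula.box ψ => ∀ t, M.R s t → SatM M t ψ

/-- The model with a single state `s₀`, a transition from `s₀` to itself, and
`V₀(s₀) = ∅`. -/
def M₀ : Kripke Unit := ⟨fun _ _ => True, fun _ => (∅ : Set ℕ)⟩

lemma satM_V_irrel {W : Type} (R : W → W → Prop) (V V' : W → Set ℕ)
    (ψ : ModalFormula) (s : W) :
    SatM ⟨R, V⟩ s ψ ↔ SatM ⟨R, V'⟩ s ψ := by
  induction ψ generalizing s with
  | top => simp [SatM]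
  | bot => simp [SatM]
  | and ψ₁ ψ₂ ih₁ ih₂ => simp [SatM, ih₁, ih₂]
  | or ψ₁ ψ₂ ih₁ ih₂ => simp [SatM, ih₁, ih₂]
  | dia ψ ih => simp [SatM, ih]
  | box ψ ih => simp [SatM, ih]

/-- For a variable-free modal formula `ψ`,
`M₀, s₀ ⊨ ∃_r ψ` (i.e., some pointed refinement of `(M₀,s₀)` satisfies `ψ`)
iff `ψ` is satisfiable in some pointed Kripke model. -/
theorem modelCheck_exr_iff_satisfiable (ψ : ModalFormula) :
    (∃ (W' : Type) (M' : Kripke W') (s' : W'),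
        RefinementOf M' s' M₀ () ∧ SatM M' s' ψ) ↔
      (∃ (W : Type) (M : Kripke W) (s : W), SatM M s ψ) := by
  constructor
  · rintro ⟨W', M', s', -, h⟩
    exact ⟨W', M', s', h⟩
  · rintro ⟨W, M, s, h⟩
    refine ⟨W, ⟨M.R, fun _ => (∅ : Set ℕ)⟩, s, ⟨fun _ _ => True, ⟨⟨(), s, trivial⟩,
      fun _ _ _ => rfl, fun _ _ t' _ _ => ⟨(), trivial, trivial⟩⟩, trivial⟩, ?_⟩
    exact (satM_V_irrel M.R _ M.V ψ s).mpr h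
end
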